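/- arXiv:1408.4710 — 5 statements merged into one kernel-verified Lean document; each statement's English description precedes it below -/
import Mathlib

section
/- Let S(A) = {a_n} be a Stanley sequence and let S(0) = {s_n} be the Stanley sequence of {0}. Then S(A) is independent if and only if there exist a constant α and a periodic sequence {b_n} of period 2^κ (for some constant κ, with 2^κ the exact period) such that a_n = α·s_n + b_n for every n. Moreover, when this holds, α is the scaling factor of S(A) and κ = κ(A). -/
/-- A set of integers is 3-free if it contains no 3-term arithmetic progression. -/
def ThreeFreeSet (S : Set ℤ) : Prop :=
  ∀ x ∈ S, ∀ y ∈ S, ∀ z ∈ S, x < y → y < z → x + z ≠ 2 * y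

/-- `a` is the Stanley sequence generated greedily from the finite 3-free set `A`
of nonnegative integers containing 0: `a` first enumerates `A` in increasing order,
and for `n ≥ |A|`, `a n` is the least integer exceeding `a (n-1)` keeping the
set of terms so far 3-free. -/
def IsStanleySeq (A : Finset ℤ) (a : ℕ → ℤ) : Prop :=
  (0 : ℤ) ∈ A ∧ (∀ x ∈ A, 0 ≤ x) ∧ ThreeFreeSet ↑A ∧
  StrictMono a ∧ (∀ i < A.card, a i ∈ A) ∧
  ∀ n, A.card ≤ n →
    IsLeast {m : ℤ | a (n - 1) < m ∧ ThreeFreeSet (a '' Set.Iio n ∪ {m})} (a n)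

/-- The two defining conditions of an independent Stanley sequence,
for a given λ and κ. -/
def IndepParams (a : ℕ → ℤ) (lam : ℤ) (κ : ℕ) : Prop :=
  ∀ k, κ ≤ k →
    (∀ i < 2 ^ k, a (2 ^ k + i) = a (2 ^ k) + a i) ∧
    a (2 ^ k) = 2 * a (2 ^ k - 1) + 1 - lam

/-- A Stanley sequence is independent if `IndepParams` holds for some λ and κ. -/
def Independent (a : ℕ → ℤ) : Prop := ∃ lam κ, IndepParams a lam κ

/-- κ(A): the minimal κ witnessing independence. -/
noncomputable def kappa (a : ℕ → ℤ) : ℕ := sInf {κ | ∃ lam, IndepParams a lam κ}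

/-- λ(A), recovered from the defining equation at k = κ(A). -/
noncomputable def lambdaA (a : ℕ → ℤ) : ℤ :=
  2 * a (2 ^ kappa a - 1) + 1 - a (2 ^ kappa a)

/-- The repeat factor ρ(A) = a_{2^{κ(A)}}. -/
noncomputable def rho (a : ℕ → ℤ) : ℤ := a (2 ^ kappa a)

/-- The scaling factor α(A), satisfying a_{2^k} = α·3^k for all k ≥ κ(A). -/
noncomputable def scalingFactor (a : ℕ → ℤ) : ℚ :=
  (a (2 ^ kappa a) : ℚ) / 3 ^ kappa a

/-- An integer `x` is covered by a set `S` if there are `y < z < x` in `S`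
with `y, z, x` in arithmetic progression. -/
def Covers (S : Set ℤ) (x : ℤ) : Prop :=
  ∃ y z, y ∈ S ∧ z ∈ S ∧ y < z ∧ z < x ∧ 2 * z = y + x

/-- An integer `x` is jointly covered by `S` and `T` if there are `y < z < x`
with `y ∈ S`, `z ∈ T`, and `y, z, x` in arithmetic progression. -/
def JointlyCovers (S T : Set ℤ) (x : ℤ) : Prop :=
  ∃ y z, y ∈ S ∧ z ∈ T ∧ y < z ∧ z < x ∧ 2 * z = y + x

/-- O(A): nonnegative integers neither in the Stanley sequence nor covered by it. -/
def OSet (a : ℕ → ℤ) : Set ℤ :=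
  {x | 0 ≤ x ∧ x ∉ Set.range a ∧ ¬ Covers (Set.range a) x}

/-- ω(A): the maximum element of O(A). -/
noncomputable def omegaA (a : ℕ → ℤ) : ℤ := sSup (OSet a)

/-- The translate `S + t` of a set of integers. -/
def shift (S : Set ℤ) (t : ℤ) : Set ℤ := (· + t) '' S

/-- A triadic number: a rational whose denominator in lowest terms is a power of 3. -/
def IsTriadic (q : ℚ) : Prop := ∃ j : ℕ, q.den = 3 ^ j

/-- base-2 digits of n read in base 3 -/
def fS (n : ℕ) : ℤ := (Nat.ofDigits 3 (Nat.digits 2 n) : ℕ)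

lemma fS_zero : fS 0 = 0 := by simp [fS]

lemma fS_rec (n : ℕ) (hn : 0 < n) : fS n = 3 * fS (n / 2) + (n % 2 : ℕ) := by
  unfold fS
  rw [Nat.digits_def' (by norm_num) hn, Nat.ofDigits_cons]
  push_cast
  ring

lemma fS_two_mul (n : ℕ) : fS (2 * n) = 3 * fS n := by
  rcases Nat.eq_zero_or_pos n with h | h
  · simp [h, fS_zero]
  · rw [fS_rec (2 * n) (by omega)]
    simp [Nat.mul_div_cancel_left, Nat.mul_mod_right]

lemma fS_two_mul_add_one (n : ℕ) : fS (2 * n + 1) = 3 * fS n + 1 := by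
  rw [fS_rec (2 * n + 1) (by omega)]
  have h1 : (2 * n + 1) / 2 = n := by omega
  have h2 : (2 * n + 1) % 2 = 1 := by omega
  rw [h1, h2]; simp

lemma fS_nonneg (n : ℕ) : 0 ≤ fS n := by
  unfold fS; positivity

lemma fS_lt_succ (n : ℕ) : fS n < fS (n + 1) := by
  induction n using Nat.strong_induction_on with
  | _ n ih =>
    rcases Nat.even_or_odd n with ⟨m, hm⟩ | ⟨m, hm⟩
    · subst hm
      rw [show m + m = 2 * m by ring, fS_two_mul, fS_two_mul_add_one]
      omega
    · subst hm
      rw [show 2 * m + 1 + 1 = 2 * (m + 1) by ring, fS_two_mul_add_one, fS_two_mul]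
      have := ih m (by omega)
      omega

lemma fS_mono : StrictMono fS := strictMono_nat_of_lt_succ fS_lt_succ

lemma fS_pow (k : ℕ) : fS (2 ^ k) = 3 ^ k := by
  induction k with
  | zero => rw [pow_zero, pow_zero, show (1:ℕ) = 2*0+1 by ring, fS_two_mul_add_one]; simp [fS_zero]
  | succ k ih => rw [pow_succ, mul_comm, fS_two_mul, ih]; ring

lemma fS_pow_add (k i : ℕ) (hi : i < 2 ^ k) : fS (2 ^ k + i) = 3 ^ k + fS i := by
  induction k generalizing i with
  | zero =>
    interval_cases i
    rw [pow_zero, show (1+0:ℕ) = 2*0+1 by ring, fS_two_mul_add_one]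
    simp [fS_zero]
  | succ k ih =>
    rcases Nat.even_or_odd i with ⟨j, hj⟩ | ⟨j, hj⟩
    · have hj' : j < 2 ^ k := by rw [pow_succ] at hi; omega
      rw [show 2 ^ (k+1) + i = 2 * (2 ^ k + j) by rw [hj]; ring, fS_two_mul, ih j hj',
        show i = 2 * j by omega, fS_two_mul]
      ring
    · have hj' : j < 2 ^ k := by rw [pow_succ] at hi; omega
      rw [show 2 ^ (k+1) + i = 2 * (2 ^ k + j) + 1 by rw [hj]; ring, fS_two_mul_add_one,
        ih j hj', show i = 2 * j + 1 by omega, fS_two_mul_add_one]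
      ring

lemma fS_pred_pow (k : ℕ) : 2 * fS (2 ^ k - 1) = 3 ^ k - 1 := by
  induction k with
  | zero => simp [fS_zero]
  | succ k ih =>
    have hp : (0:ℕ) < 2 ^ k := Nat.pow_pos (by norm_num)
    have h1 : (2:ℕ) ^ (k+1) - 1 = 2 ^ k + (2 ^ k - 1) := by rw [pow_succ]; omega
    have h2 : 2 ^ k - 1 < 2 ^ k := by omega
    rw [h1, fS_pow_add k _ h2, mul_add, ih, pow_succ]
    ring

lemma fS_rec' (n : ℕ) : fS n = 3 * fS (n / 2) + (n % 2 : ℕ) := by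
  rcases Nat.eq_zero_or_pos n with h | h
  · simp [h, fS_zero]
  · exact fS_rec n h

lemma fS_mem_range_mul3 {x : ℤ} (hx : x ∈ Set.range fS) : 3 * x ∈ Set.range fS := by
  obtain ⟨n, rfl⟩ := hx
  exact ⟨2 * n, fS_two_mul n⟩

lemma fS_mem_range_mul3_add1 {x : ℤ} (hx : x ∈ Set.range fS) : 3 * x + 1 ∈ Set.range fS := by
  obtain ⟨n, rfl⟩ := hx
  exact ⟨2 * n + 1, fS_two_mul_add_one n⟩

/-- The range of fS is 3-free. -/
lemma fS_threeFree_aux : ∀ r p q : ℕ, fS p < fS q → fS q < fS r → fS p + fS r ≠ 2 * fS q := by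
  intro r
  induction r using Nat.strong_induction_on with
  | _ r ih =>
    intro p q h1 h2 heq
    have hr0 : 0 < r := by
      rcases Nat.eq_zero_or_pos r with h | h
      · subst h; rw [fS_zero] at h2; have := fS_nonneg p; omega
      · exact h
    have digit : ∀ m : ℕ, ∃ d : ℤ, 0 ≤ d ∧ d ≤ 1 ∧ fS m = 3 * fS (m / 2) + d := by
      intro m
      refine ⟨(m % 2 : ℕ), by positivity, ?_, fS_rec' m⟩
      have : m % 2 < 2 := Nat.mod_lt _ (by norm_num)
      exact_mod_cast Nat.lt_succ_iff.mp this
    obtain ⟨dp, hdp0, hdp1, ep⟩ := digit p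
    obtain ⟨dq, hdq0, hdq1, eq'⟩ := digit q
    obtain ⟨dr, hdr0, hdr1, er⟩ := digit r
    have key : fS (p / 2) + fS (r / 2) = 2 * fS (q / 2) ∧
        fS (p / 2) < fS (q / 2) ∧ fS (q / 2) < fS (r / 2) := by
      refine ⟨?_, ?_, ?_⟩ <;>
        (interval_cases dp <;> interval_cases dq <;> interval_cases dr <;> omega)
    exact ih (r / 2) (Nat.div_lt_self hr0 (by norm_num)) (p / 2) (q / 2)
      key.2.1 key.2.2 key.1

lemma fS_threeFree : ThreeFreeSet (Set.range fS) := by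
  rintro x ⟨p, rfl⟩ y ⟨q, rfl⟩ z ⟨r, rfl⟩ h1 h2
  exact fS_threeFree_aux r p q h1 h2

/-- base-3 digits capped at 1 -/
def zC (m : ℕ) : ℕ := Nat.ofDigits 3 ((Nat.digits 3 m).map (fun d => min d 1))

/-- indicator of digit 1 in base 3 -/
def yC (m : ℕ) : ℕ := Nat.ofDigits 3 ((Nat.digits 3 m).map (fun d => if d = 1 then 1 else 0))

lemma zC_zero : zC 0 = 0 := by simp [zC]
lemma yC_zero : yC 0 = 0 := by simp [yC]

lemma zC_rec (m : ℕ) (hm : 0 < m) : zC m = 3 * zC (m / 3) + min (m % 3) 1 := by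
  unfold zC
  rw [Nat.digits_def' (by norm_num) hm, List.map_cons, Nat.ofDigits_cons]
  push_cast
  ring

lemma yC_rec (m : ℕ) (hm : 0 < m) :
    yC m = 3 * yC (m / 3) + (if m % 3 = 1 then 1 else 0) := by
  unfold yC
  rw [Nat.digits_def' (by norm_num) hm, List.map_cons, Nat.ofDigits_cons]
  push_cast
  ring

lemma yC_add (m : ℕ) : yC m + m = 2 * zC m := by
  induction m using Nat.strong_induction_on with
  | _ m ih =>
    rcases Nat.eq_zero_or_pos m with h | h
    · simp [h, yC_zero, zC_zero]
    · rw [yC_rec m h, zC_rec m h]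
      have h3 : m % 3 < 3 := Nat.mod_lt _ (by norm_num)
      have hdiv : m / 3 < m := Nat.div_lt_self h (by norm_num)
      have := ih (m / 3) hdiv
      have hm3 : m = 3 * (m / 3) + m % 3 := by omega
      interval_cases h' : m % 3 <;> simp <;> omega

lemma zC_le (m : ℕ) : zC m ≤ m := by
  induction m using Nat.strong_induction_on with
  | _ m ih =>
    rcases Nat.eq_zero_or_pos m with h | h
    · simp [h, zC_zero]
    · rw [zC_rec m h]
      have := ih (m / 3) (Nat.div_lt_self h (by norm_num))
      omega

lemma zC_mem (m : ℕ) : (zC m : ℤ) ∈ Set.range fS := by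
  induction m using Nat.strong_induction_on with
  | _ m ih =>
    rcases Nat.eq_zero_or_pos m with h | h
    · rw [h, zC_zero]; exact ⟨0, fS_zero⟩
    · rw [zC_rec m h]
      have hmem := ih (m / 3) (Nat.div_lt_self h (by norm_num))
      rcases Nat.lt_or_ge (m % 3) 1 with h' | h'
      · have : min (m % 3) 1 = 0 := by omega
        rw [this]
        push_cast
        simpa using fS_mem_range_mul3 hmem
      · have : min (m % 3) 1 = 1 := by omega
        rw [this]
        push_cast
        simpa using fS_mem_range_mul3_add1 hmem

lemma yC_mem (m : ℕ) : (yC m : ℤ) ∈ Set.range fS := by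
  induction m using Nat.strong_induction_on with
  | _ m ih =>
    rcases Nat.eq_zero_or_pos m with h | h
    · rw [h, yC_zero]; exact ⟨0, fS_zero⟩
    · rw [yC_rec m h]
      have hmem := ih (m / 3) (Nat.div_lt_self h (by norm_num))
      by_cases h' : m % 3 = 1
      · rw [if_pos h']
        push_cast
        simpa using fS_mem_range_mul3_add1 hmem
      · rw [if_neg h']
        push_cast
        simpa using fS_mem_range_mul3 hmem

lemma zC_eq_imp (m : ℕ) (h : zC m = m) : (m : ℤ) ∈ Set.range fS := by
  induction m using Nat.strong_induction_on with
  | _ m ih =>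
    rcases Nat.eq_zero_or_pos m with h0 | h0
    · rw [h0]; exact ⟨0, fS_zero⟩
    · rw [zC_rec m h0] at h
      have hle := zC_le (m / 3)
      have hmin : min (m % 3) 1 ≤ m % 3 := by omega
      have h3 : m = 3 * (m / 3) + m % 3 := by omega
      have he1 : zC (m / 3) = m / 3 := by omega
      have he2 : min (m % 3) 1 = m % 3 := by omega
      have hmem := ih (m / 3) (Nat.div_lt_self h0 (by norm_num)) he1
      have : (m : ℤ) = 3 * (m / 3 : ℕ) + (m % 3 : ℕ) := by exact_mod_cast h3
      rw [this]
      rcases Nat.lt_or_ge (m % 3) 1 with h' | h'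
      · have : m % 3 = 0 := by omega
        rw [this]
        simpa using fS_mem_range_mul3 hmem
      · have : m % 3 = 1 := by omega
        rw [this]
        simpa using fS_mem_range_mul3_add1 hmem

lemma yC_le (m : ℕ) : yC m ≤ zC m := by
  induction m using Nat.strong_induction_on with
  | _ m ih =>
    rcases Nat.eq_zero_or_pos m with h | h
    · simp [h, yC_zero, zC_zero]
    · rw [yC_rec m h, zC_rec m h]
      have := ih (m / 3) (Nat.div_lt_self h (by norm_num))
      have h3 : m % 3 < 3 := Nat.mod_lt _ (by norm_num)
      split <;> omega

lemma yC_eq_imp (m : ℕ) (h : yC m = zC m) : zC m = m := by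
  induction m using Nat.strong_induction_on with
  | _ m ih =>
    rcases Nat.eq_zero_or_pos m with h0 | h0
    · simp [h0, zC_zero]
    · rw [yC_rec m h0, zC_rec m h0] at h
      rw [zC_rec m h0]
      have hy := yC_le (m / 3)
      have h3 : m % 3 < 3 := Nat.mod_lt _ (by norm_num)
      have hzle := zC_le (m / 3)
      have hm3 : m = 3 * (m / 3) + m % 3 := by omega
      have hr : m % 3 ≠ 2 := by
        intro h2
        rw [h2] at h
        simp at h
        omega
      have heq : yC (m / 3) = zC (m / 3) := by split at h <;> omega
      have := ih (m / 3) (Nat.div_lt_self h0 (by norm_num)) heq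
      omega

lemma ThreeFreeSet.mono {S T : Set ℤ} (h : S ⊆ T) (hT : ThreeFreeSet T) : ThreeFreeSet S :=
  fun x hx y hy z hz h1 h2 => hT x (h hx) y (h hy) z (h hz) h1 h2

/-- every nonnegative integer not in the range of fS is covered -/
lemma fS_covers {m : ℤ} (h0 : 0 ≤ m) (hm : m ∉ Set.range fS) :
    ∃ y z : ℤ, y ∈ Set.range fS ∧ z ∈ Set.range fS ∧ y < z ∧ z < m ∧ y + m = 2 * z := by
  set M := m.toNat with hM
  have hmM : (M : ℤ) = m := Int.toNat_of_nonneg h0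
  have hzlt : zC M < M := by
    rcases Nat.lt_or_ge (zC M) M with h | h
    · exact h
    · exfalso
      have := zC_le M
      have hzz : zC M = M := by omega
      exact hm (by rw [← hmM]; exact zC_eq_imp M hzz)
  have hylt : yC M < zC M := by
    rcases Nat.lt_or_ge (yC M) (zC M) with h | h
    · exact h
    · exfalso
      have := yC_le M
      have hyy : yC M = zC M := by omega
      have := yC_eq_imp M hyy
      omega
  refine ⟨(yC M : ℤ), (zC M : ℤ), yC_mem M, zC_mem M, by exact_mod_cast hylt,
    by rw [← hmM]; exact_mod_cast hzlt, ?_⟩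
  have := yC_add M
  rw [← hmM]
  exact_mod_cast this

lemma isStanley_fS : IsStanleySeq {0} fS := by
  have hcard : ({0} : Finset ℤ).card = 1 := Finset.card_singleton 0
  refine ⟨Finset.mem_singleton_self 0, ?_, ?_, fS_mono, ?_, ?_⟩
  · intro x hx
    rw [Finset.mem_singleton] at hx
    omega
  · intro x hx y hy z hz h1 h2
    simp only [Finset.coe_singleton, Set.mem_singleton_iff] at hx hy
    omega
  · intro i hi
    rw [hcard] at hi
    interval_cases i
    rw [Finset.mem_singleton, fS_zero]
  · intro n hn
    rw [hcard] at hn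
    constructor
    · constructor
      · exact fS_mono (by omega : n - 1 < n)
      · refine ThreeFreeSet.mono ?_ fS_threeFree
        rintro x (⟨i, _, rfl⟩ | hx)
        · exact ⟨i, rfl⟩
        · rw [Set.mem_singleton_iff] at hx
          exact hx ▸ ⟨n, rfl⟩
    · rintro m ⟨hlt, hfree⟩
      by_contra hcon
      push_neg at hcon
      -- fS (n-1) < m < fS n
      have hm0 : 0 ≤ m := le_trans (fS_nonneg (n-1)) (le_of_lt hlt)
      have hmnotin : m ∉ Set.range fS := by
        rintro ⟨j, rfl⟩
        have hj1 : n - 1 < j := fS_mono.lt_iff_lt.mp hlt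
        have hj2 : j < n := fS_mono.lt_iff_lt.mp hcon
        omega
      obtain ⟨y, z, ⟨p, rfl⟩, ⟨q, rfl⟩, hyz, hzm, hap⟩ := fS_covers hm0 hmnotin
      have hq : q < n := fS_mono.lt_iff_lt.mp (lt_trans hzm hcon)
      have hp : p < n := fS_mono.lt_iff_lt.mp (lt_trans hyz (lt_trans hzm hcon))
      exact hfree (fS p) (Or.inl ⟨p, hp, rfl⟩) (fS q) (Or.inl ⟨q, hq, rfl⟩) m
        (Or.inr rfl) hyz hzm (by omega)

/-- Uniqueness: the Stanley sequence of {0} is fS. -/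
lemma stanley_zero_eq (s : ℕ → ℤ) (hs : IsStanleySeq {0} s) : ∀ n, s n = fS n := by
  obtain ⟨_, _, _, hmono, hinit, hleast⟩ := hs
  intro n
  induction n using Nat.strong_induction_on with
  | _ n ih =>
    rcases Nat.eq_zero_or_pos n with h0 | h0
    · subst h0
      have := hinit 0 (by rw [Finset.card_singleton]; omega)
      rw [Finset.mem_singleton] at this
      rw [this, fS_zero]
    · have h1 : ({0} : Finset ℤ).card ≤ n := by rw [Finset.card_singleton]; omega
      have himg : s '' Set.Iio n = fS '' Set.Iio n := by
        apply Set.image_congr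
        intro i hi
        exact ih i hi
      have h2 := hleast n h1
      have h3 := (isStanley_fS.2.2.2.2.2) n (by rw [Finset.card_singleton]; omega)
      rw [himg, ih (n-1) (by omega)] at h2
      exact h2.unique h3

section PeriodicHelpers

variable {X : Type*} {b : ℕ → X}

lemma per_add_mul {p : ℕ} (hb : Function.Periodic b p) : ∀ c i, b (i + c * p) = b i := by
  intro c
  induction c with
  | zero => simp
  | succ c ih =>
    intro i
    rw [show i + (c+1) * p = (i + c * p) + p by ring, hb, ih]

lemma per_mod {p q : ℕ} (hb : Function.Periodic b p) (hq : Function.Periodic b q) :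
    Function.Periodic b (q % p) := by
  intro n
  have h1 : n + q % p + (q / p) * p = n + q := by
    have := Nat.mod_add_div' q p
    omega
  calc b (n + q % p) = b (n + q % p + (q / p) * p) := (per_add_mul hb _ _).symm
    _ = b (n + q) := by rw [h1]
    _ = b n := hq n

lemma per_gcd : ∀ p q : ℕ, Function.Periodic b p → Function.Periodic b q →
    Function.Periodic b (Nat.gcd p q) := by
  intro p q
  induction p, q using Nat.gcd.induction with
  | H0 n => intro _ h; simpa using h
  | H1 m n hm ih =>
    intro hbm hbn
    rw [Nat.gcd_rec]
    exact ih (per_mod hbm hbn) hbm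

end PeriodicHelpers

/-- For a Stanley sequence, a 0 = 0. -/
lemma stanley_a0 {A : Finset ℤ} {a : ℕ → ℤ} (hA : IsStanleySeq A a) : a 0 = 0 := by
  obtain ⟨h0, hpos, _, hmono, hinit, _⟩ := hA
  have hcard : 0 < A.card := Finset.card_pos.mpr ⟨0, h0⟩
  have hsub : (Finset.range A.card).image a ⊆ A := by
    intro x hx
    rw [Finset.mem_image] at hx
    obtain ⟨i, hi, rfl⟩ := hx
    exact hinit i (Finset.mem_range.mp hi)
  have hcard2 : ((Finset.range A.card).image a).card = A.card := by
    rw [Finset.card_image_of_injective _ hmono.injective, Finset.card_range]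
  have heq : (Finset.range A.card).image a = A :=
    Finset.eq_of_subset_of_card_le hsub (by omega)
  have : (0 : ℤ) ∈ (Finset.range A.card).image a := by rw [heq]; exact h0
  rw [Finset.mem_image] at this
  obtain ⟨i, _, hi⟩ := this
  have h1 : a 0 ≤ a i := hmono.monotone (Nat.zero_le i)
  have h2 : 0 ≤ a 0 := hpos _ (hinit 0 hcard)
  omega

/-- powers scale by 3 under independence -/
lemma indep_apow {a : ℕ → ℤ} {lam : ℤ} {κ : ℕ} (hP : IndepParams a lam κ) :
    ∀ j, a (2 ^ (κ + j)) = 3 ^ j * a (2 ^ κ) := by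
  intro j
  induction j with
  | zero => simp
  | succ j ih =>
    set k := κ + j with hk
    have hpk : (0:ℕ) < 2 ^ k := Nat.pow_pos (by norm_num)
    have h1 := (hP k (by omega)).1 (2 ^ k - 1) (by omega)
    have h2 := (hP k (by omega)).2
    have h3 := (hP (k + 1) (by omega)).2
    have hidx : 2 ^ k + (2 ^ k - 1) = 2 ^ (k+1) - 1 := by
      rw [pow_succ]; omega
    rw [hidx] at h1
    have : a (2 ^ (k+1)) = 3 * a (2 ^ k) := by
      rw [h3, h1]; omega
    rw [show κ + (j+1) = k + 1 by omega, this, ih]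
    ring

/-- the decomposition implies independence with the natural lambda -/
lemma indep_of_decomp (a : ℕ → ℤ) (ha0 : a 0 = 0) (α : ℚ) (κ : ℕ) (b : ℕ → ℚ)
    (hb : Function.Periodic b (2 ^ κ)) (hd : ∀ n, (a n : ℚ) = α * fS n + b n) :
    IndepParams a (2 * a (2 ^ κ - 1) + 1 - a (2 ^ κ)) κ := by
  have hb0 : b 0 = 0 := by
    have := hd 0
    rw [ha0, fS_zero] at this
    push_cast at this
    linarith
  have hbmul : ∀ i c, b (i + c * 2 ^ κ) = b i := fun i c => per_add_mul hb c i
  have hppos : ∀ k : ℕ, (0:ℕ) < 2 ^ k := fun k => Nat.pow_pos (by norm_num)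
  have hble : ∀ k, κ ≤ k → (2:ℕ) ^ κ ≤ 2 ^ k := fun k hk => Nat.pow_le_pow_right (by norm_num) hk
  have hsplit : ∀ k, κ ≤ k → (2:ℕ) ^ (k - κ) * 2 ^ κ = 2 ^ k := by
    intro k hk
    rw [← pow_add]
    congr 1
    omega
  have hbpow : ∀ k, κ ≤ k → b (2 ^ k) = 0 := by
    intro k hk
    have h : (2:ℕ) ^ k = 0 + 2 ^ (k - κ) * 2 ^ κ := by rw [zero_add, hsplit k hk]
    rw [h, hbmul, hb0]
  have hbpred : ∀ k, κ ≤ k → b (2 ^ k - 1) = b (2 ^ κ - 1) := by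
    intro k hk
    have h : (2:ℕ) ^ k - 1 = (2 ^ κ - 1) + (2 ^ (k - κ) - 1) * 2 ^ κ := by
      have e1 : ((2:ℕ) ^ (k - κ) - 1) * 2 ^ κ = 2 ^ k - 2 ^ κ := by
        rw [Nat.sub_mul, one_mul, hsplit k hk]
      rw [e1]
      have h2 := hble k hk
      have h3 := hppos κ
      omega
    rw [h, hbmul]
  have hfq : ∀ k, (fS (2 ^ k) : ℚ) = 3 ^ k := by
    intro k
    rw [fS_pow]
    push_cast
    ring
  have haq : ∀ k, κ ≤ k → (a (2 ^ k) : ℚ) = α * 3 ^ k := by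
    intro k hk
    rw [hd, hfq, hbpow k hk, add_zero]
  have hfpred : ∀ k, (fS (2 ^ k - 1) : ℚ) = (3 ^ k - 1) / 2 := by
    intro k
    have := fS_pred_pow k
    have h2 : (2 * fS (2 ^ k - 1) : ℚ) = 3 ^ k - 1 := by exact_mod_cast this
    linarith
  have hapred : ∀ k, κ ≤ k → (a (2 ^ k - 1) : ℚ) = α * ((3 ^ k - 1) / 2) + b (2 ^ κ - 1) := by
    intro k hk
    rw [hd, hfpred, hbpred k hk]
  intro k hk
  constructor
  · intro i hi
    have hcast : ((a (2 ^ k + i) : ℤ) : ℚ) = ((a (2 ^ k) + a i : ℤ) : ℚ) := by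
      push_cast
      rw [hd (2 ^ k + i), hd i, haq k hk]
      have hf : (fS (2 ^ k + i) : ℚ) = 3 ^ k + fS i := by
        rw [fS_pow_add k i hi]; push_cast; ring
      have hbi : b (2 ^ k + i) = b i := by
        have h : 2 ^ k + i = i + 2 ^ (k - κ) * 2 ^ κ := by rw [hsplit k hk]; omega
        rw [h, hbmul]
      rw [hf, hbi]
      ring
    exact_mod_cast hcast
  · have hcast : ((a (2 ^ k) : ℤ) : ℚ) =
        ((2 * a (2 ^ k - 1) + 1 - (2 * a (2 ^ κ - 1) + 1 - a (2 ^ κ)) : ℤ) : ℚ) := by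
      push_cast
      rw [haq k hk, haq κ (le_refl κ), hapred k hk, hapred κ (le_refl κ)]
      ring
    exact_mod_cast hcast

/-- under independence the difference b is determined by n mod 2^κ -/
lemma decomp_of_indep {a : ℕ → ℤ} {lam : ℤ} {κ : ℕ} (hP : IndepParams a lam κ) :
    ∀ n, (a n : ℚ) - (a (2 ^ κ) : ℚ) / 3 ^ κ * fS n =
      (a (n % 2 ^ κ) : ℚ) - (a (2 ^ κ) : ℚ) / 3 ^ κ * fS (n % 2 ^ κ) := by
  set α : ℚ := (a (2 ^ κ) : ℚ) / 3 ^ κ with hα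
  intro n
  induction n using Nat.strong_induction_on with
  | _ n ih =>
    rcases Nat.lt_or_ge n (2 ^ κ) with h | h
    · rw [Nat.mod_eq_of_lt h]
    · have hn0 : n ≠ 0 := by
        have := Nat.pow_pos (n := κ) (show 0 < 2 by norm_num)
        omega
      set k := Nat.log 2 n with hkdef
      have hk1 : 2 ^ k ≤ n := Nat.pow_log_le_self 2 hn0
      have hk2 : n < 2 ^ (k + 1) := Nat.lt_pow_succ_log_self (by norm_num) n
      have hκk : κ ≤ k := by
        have h1 : (2:ℕ) ^ κ < 2 ^ (k + 1) := lt_of_le_of_lt h hk2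
        have h2 := (Nat.pow_lt_pow_iff_right (show 1 < 2 by norm_num)).mp h1
        omega
      set i := n - 2 ^ k with hidef
      have hilt : i < 2 ^ k := by
        have : (2:ℕ) ^ (k+1) = 2 ^ k + 2 ^ k := by rw [pow_succ]; ring
        omega
      have hni : n = 2 ^ k + i := by omega
      have ha : a n = a (2 ^ k) + a i := by rw [hni]; exact (hP k hκk).1 i hilt
      have hf : fS n = 3 ^ k + fS i := by rw [hni]; exact fS_pow_add k i hilt
      have hapow : (a (2 ^ k) : ℚ) = α * 3 ^ k := by
        have h1 := indep_apow hP (k - κ)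
        rw [show κ + (k - κ) = k by omega] at h1
        have h2 : ((a (2 ^ k) : ℤ) : ℚ) = (3:ℚ) ^ (k - κ) * (a (2 ^ κ) : ℚ) := by
          rw [h1]; push_cast; ring
        rw [h2, hα]
        have h3 : (3:ℚ) ^ k = 3 ^ κ * 3 ^ (k - κ) := by
          rw [← pow_add]
          congr 1
          omega
        have h4 : (3:ℚ) ^ κ ≠ 0 := pow_ne_zero _ (by norm_num)
        rw [div_mul_eq_mul_div, eq_div_iff h4, h3]
        ring
      have hmod : n % 2 ^ κ = i % 2 ^ κ := by
        have hsplit : (2:ℕ) ^ (k - κ) * 2 ^ κ = 2 ^ k := by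
          rw [← pow_add]; congr 1; omega
        have : n = i + 2 ^ (k - κ) * 2 ^ κ := by omega
        rw [this, Nat.add_mul_mod_self_right]
      have hiih := ih i (by omega)
      rw [hmod, ← hiih]
      have haq : (a n : ℚ) = α * 3 ^ k + (a i : ℚ) := by
        rw [ha]; push_cast; linarith [hapow]
      have hfq : (fS n : ℚ) = 3 ^ k + (fS i : ℚ) := by
        rw [hf]; push_cast; ring
      rw [haq, hfq]
      ring

lemma forward_package (a : ℕ → ℤ) (ha0 : a 0 = 0) (hind : Independent a) :
    Function.Periodic (fun n => (a n : ℚ) - scalingFactor a * fS n) (2 ^ kappa a) ∧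
    (∀ m, 0 < m → Function.Periodic (fun n => (a n : ℚ) - scalingFactor a * fS n) m →
      2 ^ kappa a ≤ m) := by
  have hne : {κ | ∃ lam, IndepParams a lam κ}.Nonempty := by
    obtain ⟨lam, κ, h⟩ := hind
    exact ⟨κ, lam, h⟩
  have hmem : ∃ lam, IndepParams a lam (kappa a) := Nat.sInf_mem hne
  obtain ⟨lam, hP⟩ := hmem
  set b : ℕ → ℚ := fun n => (a n : ℚ) - scalingFactor a * fS n with hbdef
  have hBmod : ∀ n, b n = b (n % 2 ^ kappa a) := by
    intro n
    have := decomp_of_indep hP n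
    simpa only [hbdef, scalingFactor] using this
  have hper : Function.Periodic b (2 ^ kappa a) := by
    intro n
    rw [hBmod (n + 2 ^ kappa a), Nat.add_mod_right, ← hBmod n]
  refine ⟨hper, ?_⟩
  intro m hm hperm
  by_contra hcon
  push_neg at hcon
  have hg : Function.Periodic b (Nat.gcd m (2 ^ kappa a)) := per_gcd _ _ hperm hper
  have hdvd : Nat.gcd m (2 ^ kappa a) ∣ 2 ^ kappa a := Nat.gcd_dvd_right _ _
  obtain ⟨j, hjle, hgeq⟩ := (Nat.dvd_prime_pow Nat.prime_two).mp hdvd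
  have hjlt : j < kappa a := by
    have h1 : Nat.gcd m (2 ^ kappa a) ≤ m := Nat.le_of_dvd hm (Nat.gcd_dvd_left _ _)
    have h2 : (2:ℕ) ^ j < 2 ^ kappa a := by omega
    exact (Nat.pow_lt_pow_iff_right (show 1 < 2 by norm_num)).mp h2
  have hper2 : Function.Periodic b (2 ^ j) := hgeq ▸ hg
  have hd : ∀ n, (a n : ℚ) = scalingFactor a * fS n + b n := by
    intro n
    simp only [hbdef]
    ring
  have hip := indep_of_decomp a ha0 (scalingFactor a) j b hper2 hd
  have : kappa a ≤ j := Nat.sInf_le ⟨_, hip⟩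
  omega

/-- S(A) is independent iff a_n = α·s_n + b_n with {b_n} periodic of
exact period 2^κ; in that case α is the scaling factor and κ = κ(A). -/
theorem independent_iff_scaling_decomposition (A : Finset ℤ) (a s : ℕ → ℤ)
    (hA : IsStanleySeq A a) (hs : IsStanleySeq {0} s) :
    (Independent a ↔
      ∃ (α : ℚ) (κ : ℕ) (b : ℕ → ℚ),
        Function.Periodic b (2 ^ κ) ∧
        (∀ m : ℕ, 0 < m → Function.Periodic b m → 2 ^ κ ≤ m) ∧
        ∀ n : ℕ, (a n : ℚ) = α * (s n : ℚ) + b n) ∧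
    (∀ (α : ℚ) (κ : ℕ) (b : ℕ → ℚ),
      Function.Periodic b (2 ^ κ) →
      (∀ m : ℕ, 0 < m → Function.Periodic b m → 2 ^ κ ≤ m) →
      (∀ n : ℕ, (a n : ℚ) = α * (s n : ℚ) + b n) →
      α = scalingFactor a ∧ κ = kappa a) := by
  have hsf : ∀ n, s n = fS n := stanley_zero_eq s hs
  have ha0 : a 0 = 0 := stanley_a0 hA
  constructor
  · constructor
    · intro hind
      obtain ⟨hper, hmin⟩ := forward_package a ha0 hind
      refine ⟨scalingFactor a, kappa a, fun n => (a n : ℚ) - scalingFactor a * fS n,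
        hper, hmin, ?_⟩
      intro n
      rw [hsf n]
      ring
    · rintro ⟨α, κ, b, hper, hmin, hd⟩
      have hd' : ∀ n, (a n : ℚ) = α * fS n + b n := by
        intro n
        rw [← hsf n]
        exact hd n
      exact ⟨_, κ, indep_of_decomp a ha0 α κ b hper hd'⟩
  · intro α κ b hper hmin hd
    have hd' : ∀ n, (a n : ℚ) = α * fS n + b n := by
      intro n
      rw [← hsf n]
      exact hd n
    have hP' := indep_of_decomp a ha0 α κ b hper hd'
    have hind : Independent a := ⟨_, κ, hP'⟩
    have hκ0 : kappa a ≤ κ := Nat.sInf_le ⟨_, hP'⟩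
    obtain ⟨hper0, hmin0⟩ := forward_package a ha0 hind
    set b0 : ℕ → ℚ := fun n => (a n : ℚ) - scalingFactor a * fS n with hb0def
    have hbn : ∀ n, b n = (a n : ℚ) - α * fS n := by
      intro n
      have := hd' n
      linarith
    have hαeq : α = scalingFactor a := by
      by_contra hne
      have hdn : ∀ n, b0 n - b n = (α - scalingFactor a) * fS n := by
        intro n
        rw [hbn n]
        simp only [hb0def]
        ring
      set L : ℕ := 2 ^ kappa a * 2 ^ κ with hLdef
      have hLpos : 0 < L :=
        mul_pos (Nat.pow_pos (by norm_num)) (Nat.pow_pos (by norm_num))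
      have hbL : b (0 + L) = b 0 := per_add_mul hper (2 ^ kappa a) 0
      have hb0L : b0 (0 + L) = b0 0 := by
        have := per_add_mul hper0 (2 ^ κ) 0
        rw [show 2 ^ κ * 2 ^ kappa a = L by rw [hLdef]; ring] at this
        exact this
      have h1 : b0 (0 + L) - b (0 + L) = b0 0 - b 0 := by rw [hbL, hb0L]
      rw [hdn, hdn] at h1
      have h2 : (fS (0 + L) : ℚ) = (fS 0 : ℚ) :=
        mul_left_cancel₀ (sub_ne_zero.mpr hne) h1
      have h3 : fS (0 + L) = fS 0 := by exact_mod_cast h2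
      have h4 : fS 0 < fS (0 + L) := fS_mono (by omega)
      omega
    have hbeq : ∀ n, b n = b0 n := by
      intro n
      rw [hbn n, hαeq]
    have hperb : Function.Periodic b (2 ^ kappa a) := by
      intro n
      rw [hbeq, hbeq]
      exact hper0 n
    have h5 : 2 ^ κ ≤ 2 ^ kappa a :=
      hmin _ (Nat.pow_pos (by norm_num)) hperb
    have h6 : κ ≤ kappa a := (Nat.pow_le_pow_iff_right (show 1 < 2 by norm_num)).mp h5
    exact ⟨hαeq, le_antisymm h6 hκ0⟩
end

section
/- Let S(A) = {a_n} be an independent Stanley sequence, let k ≥ κ(A), set c = a_{2^k} and A_k = {a_0, a_1, ..., a_{2^k − 1}}, and suppose a_{2^k − 1} ≥ λ(A) + ω(A). Then for every integer x, the set (A_k + x) ∪ (A_k + c + x) covers every integer in the set ([x, 3c + x) \ ((A_k ∪ (A_k + c) ∪ O(A)) + x)) ∪ (O(A) + 3c + x). -/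
section Aux

variable {A : Finset ℤ} {a : ℕ → ℤ}

lemma threeFree_mono {S T : Set ℤ} (h : ThreeFreeSet T) (hST : S ⊆ T) : ThreeFreeSet S :=
  fun x hx y hy z hz => h x (hST hx) y (hST hy) z (hST hz)

lemma stanley_a_nonneg (hA : IsStanleySeq A a) : ∀ i, 0 ≤ a i := by
  obtain ⟨h0A, hpos, _, hmono, hmem, _⟩ := hA
  have hcard : 0 < A.card := Finset.card_pos.2 ⟨0, h0A⟩
  have h0 : 0 ≤ a 0 := hpos _ (hmem 0 hcard)
  exact fun i => h0.trans (hmono.monotone (Nat.zero_le i))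

lemma stanley_image_card (hA : IsStanleySeq A a) :
    a '' Set.Iio (A.card) = ↑A := by
  obtain ⟨h0A, hpos, _, hmono, hmem, _⟩ := hA
  have hsub : (Finset.range A.card).image a ⊆ A := by
    intro y hy
    obtain ⟨i, hi, rfl⟩ := Finset.mem_image.1 hy
    exact hmem i (Finset.mem_range.1 hi)
  have hcard : A.card ≤ ((Finset.range A.card).image a).card := by
    rw [Finset.card_image_of_injective _ hmono.injective, Finset.card_range]
  have heq := Finset.eq_of_subset_of_card_le hsub hcard
  conv_rhs => rw [← heq, Finset.coe_image, Finset.coe_range]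

lemma stanley_a_zero (hA : IsStanleySeq A a) : a 0 = 0 := by
  have himg := stanley_image_card hA
  have h0 : (0:ℤ) ∈ a '' Set.Iio (A.card) := by rw [himg]; exact_mod_cast hA.1
  obtain ⟨j, _, hj⟩ := h0
  have h1 : a 0 ≤ a j := hA.2.2.2.1.monotone (Nat.zero_le j)
  have h2 := stanley_a_nonneg hA 0
  omega

lemma stanley_le_apply (hA : IsStanleySeq A a) : ∀ n : ℕ, (n : ℤ) ≤ a n := by
  intro n
  induction n with
  | zero => simp [stanley_a_zero hA]
  | succ n ih =>
    have h2 : a n < a (n + 1) := hA.2.2.2.1 (by omega)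
    push_cast; omega

lemma stanley_threeFree_init (hA : IsStanleySeq A a) (n : ℕ) :
    ThreeFreeSet (a '' Set.Iio n) := by
  rcases le_or_gt n A.card with h | h
  · exact threeFree_mono hA.2.2.1 (by
      rw [← stanley_image_card hA]
      exact Set.image_mono (fun i hi => lt_of_lt_of_le hi h))
  · obtain ⟨m, rfl⟩ : ∃ m, n = m + 1 := ⟨n - 1, by omega⟩
    have hge : A.card ≤ m := by omega
    have := (hA.2.2.2.2.2 m hge).1.2
    have himg : a '' Set.Iio (m + 1) = a '' Set.Iio m ∪ {a m} := by
      have : Set.Iio (m + 1) = Set.Iio m ∪ {m} := by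
        ext i; simp [Nat.lt_succ_iff, Nat.lt_iff_le_pred, le_iff_lt_or_eq]
      rw [this, Set.image_union, Set.image_singleton]
    rwa [himg]
lemma stanley_greedy_cover (hA : IsStanleySeq A a)
    (x : ℤ) (hx : a A.card < x) (hxr : x ∉ Set.range a) :
    Covers (Set.range a) x := by
  have hmono := hA.2.2.2.1
  have hP : ∃ m, x < a m := by
    refine ⟨(x.toNat + 1), ?_⟩
    have h1 := stanley_le_apply hA (x.toNat + 1)
    have h2 : x ≤ (x.toNat : ℤ) := Int.self_le_toNat x
    push_cast at h1 ⊢; omega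
  classical
  let n := Nat.find hP
  have hxn : x < a n := Nat.find_spec hP
  have hnle : ∀ m < n, a m ≤ x := fun m hm => not_lt.1 (Nat.find_min hP hm)
  have hcardn : A.card < n := by
    by_contra h
    have : a n ≤ a A.card := hmono.monotone (by omega)
    omega
  have hgr := hA.2.2.2.2.2 n (by omega)
  -- x is not in the greedy candidate set
  have hxne : ∀ m < n, a m < x := by
    intro m hm
    have := hnle m hm
    rcases lt_or_eq_of_le this with h | h
    · exact h
    · exact absurd ⟨m, h⟩ hxr
  have hax : a (n - 1) < x := hxne (n - 1) (by omega)
  have hnotfree : ¬ ThreeFreeSet (a '' Set.Iio n ∪ {x}) := by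
    intro hfree
    have : a n ≤ x := hgr.2 ⟨hax, hfree⟩
    omega
  have hfreeIio : ThreeFreeSet (a '' Set.Iio n) := stanley_threeFree_init hA n
  -- extract the violating triple
  unfold ThreeFreeSet at hnotfree
  push_neg at hnotfree
  obtain ⟨p, hp, q, hq, r, hr, hpq, hqr, heq⟩ := hnotfree
  have hlt : ∀ w ∈ a '' Set.Iio n, w < x := by
    rintro w ⟨m, hm, rfl⟩; exact hxne m hm
  have hrx : r = x := by
    rcases hr with hr | hr
    · exfalso
      have hrlt : r < x := hlt r hr
      have hpmem : p ∈ a '' Set.Iio n := by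
        rcases hp with hp | hp
        · exact hp
        · simp at hp; omega
      have hqmem : q ∈ a '' Set.Iio n := by
        rcases hq with hq | hq
        · exact hq
        · simp at hq; omega
      exact hfreeIio p hpmem q hqmem r hr hpq hqr heq
    · simpa using hr
  subst hrx
  have hpmem : p ∈ a '' Set.Iio n := by
    rcases hp with hp | hp
    · exact hp
    · simp at hp; omega
  have hqmem : q ∈ a '' Set.Iio n := by
    rcases hq with hq | hq
    · exact hq
    · simp at hq; omega
  have himg : a '' Set.Iio n ⊆ Set.range a := by
    rintro w ⟨m, _, rfl⟩; exact ⟨m, rfl⟩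
  exact ⟨p, q, himg hpmem, himg hqmem, hpq, hqr, by omega⟩

lemma oset_bddAbove (hA : IsStanleySeq A a) : ∀ w ∈ OSet a, w ≤ omegaA a := by
  have hbdd : BddAbove (OSet a) := by
    refine ⟨a A.card, fun w hw => ?_⟩
    obtain ⟨h0, hr, hc⟩ := hw
    by_contra h
    exact hc (stanley_greedy_cover hA w (by omega) hr)
  exact fun w hw => le_csSup hbdd hw

lemma indep_extract (hInd : Independent a) : IndepParams a (lambdaA a) (kappa a) := by
  obtain ⟨lam, κ, h⟩ := hInd
  have hne : {κ' | ∃ lam, IndepParams a lam κ'}.Nonempty := ⟨κ, lam, h⟩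
  obtain ⟨lam0, h0⟩ := Nat.sInf_mem hne
  have heq : lam0 = lambdaA a := by
    have h2 := (h0 (kappa a) le_rfl).2
    unfold lambdaA
    omega
  rwa [heq] at h0

lemma indep_triple {a : ℕ → ℤ} (hp : IndepParams a (lambdaA a) (kappa a)) {K : ℕ}
    (hK : kappa a ≤ K) :
    a (2 ^ (K + 1) - 1) = a (2 ^ K) + a (2 ^ K - 1) ∧
    a (2 ^ (K + 1)) = 3 * a (2 ^ K) := by
  have h1le : (1:ℕ) ≤ 2 ^ K := Nat.one_le_two_pow
  have hps : (2:ℕ) ^ (K + 1) = 2 * 2 ^ K := by rw [pow_succ]; ring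
  have h1 := (hp K hK).1 (2 ^ K - 1) (by omega)
  have hidx : 2 ^ K + (2 ^ K - 1) = 2 ^ (K + 1) - 1 := by omega
  rw [hidx] at h1
  have h2 := (hp K hK).2
  have h3 := (hp (K + 1) (by omega)).2
  exact ⟨h1, by omega⟩

end Aux

/-- Lemma 3.2(c): `(A_k + x) ∪ (A_k + c + x)` covers
`([x, 3c+x) \ ((A_k ∪ (A_k + c) ∪ O(A)) + x)) ∪ (O(A) + 3c + x)`. -/
theorem cover_part_c (A : Finset ℤ) (a : ℕ → ℤ)
    (hA : IsStanleySeq A a) (hInd : Independent a) (k : ℕ) (hk : kappa a ≤ k)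
    (c : ℤ) (hc : c = a (2 ^ k))
    (Ak : Set ℤ) (hAk : Ak = a '' Set.Iio (2 ^ k))
    (hbound : lambdaA a + omegaA a ≤ a (2 ^ k - 1)) :
    ∀ x : ℤ,
      ∀ z ∈ (Set.Ico x (3 * c + x) \ shift (Ak ∪ shift Ak c ∪ OSet a) x) ∪
          shift (OSet a) (3 * c + x),
        Covers (shift Ak x ∪ shift Ak (c + x)) z := by
  have hp := indep_extract hInd
  set lam := lambdaA a with hlam
  have hmono := hA.2.2.2.1
  have hnn := stanley_a_nonneg hA
  have h1le : (1:ℕ) ≤ 2 ^ k := Nat.one_le_two_pow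
  have h2k1 : (2:ℕ) ^ (k+1) = 2 * 2 ^ k := by rw [pow_succ]; ring
  have h2k2 : (2:ℕ) ^ (k+2) = 4 * 2 ^ k := by rw [pow_succ, pow_succ]; ring
  obtain ⟨htop1, h3c'⟩ := indep_triple hp hk
  obtain ⟨htop2, h9c'⟩ := indep_triple hp (hk.trans (Nat.le_succ k))
  set a' := a (2 ^ k - 1) with ha'
  have hceq : c = 2 * a' + 1 - lam := by rw [hc]; exact (hp k hk).2
  have ha'c : a' < c := by rw [hc]; exact hmono (by omega)
  have ha'0 : 0 ≤ a' := hnn _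
  have hlama' : lam ≤ a' := by omega
  have hcpos : a' + 1 ≤ c := by omega
  have h3c : a (2 ^ (k+1)) = 3 * c := by rw [h3c', hc]
  have h9c : a (2 ^ (k+2)) = 9 * c := by rw [h9c', h3c]; ring
  have htop1' : a (2 ^ (k+1) - 1) = c + a' := by rw [htop1, hc]
  have hblk1 : ∀ i < 2 ^ k, a (2 ^ k + i) = c + a i := by
    intro i hi; rw [(hp k hk).1 i hi, hc]
  have hblk2 : ∀ i < 2 ^ (k+1), a (2 ^ (k+1) + i) = 3 * c + a i := by
    intro i hi; rw [(hp (k+1) (by omega)).1 i hi, h3c]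
  have hlow : ∀ m, m < 2 ^ k → a m ≤ a' := fun m hm => hmono.monotone (by omega)
  have hlow1 : ∀ m, m < 2 ^ (k+1) → a m ≤ c + a' := by
    intro m hm
    have := hmono.monotone (show m ≤ 2 ^ (k+1) - 1 by omega)
    omega
  have hhi : ∀ m, 2 ^ (k+1) ≤ m → 3 * c ≤ a m := by
    intro m hm; have := hmono.monotone hm; omega
  have hhi2 : ∀ m, 2 ^ (k+2) ≤ m → 9 * c ≤ a m := by
    intro m hm; have := hmono.monotone hm; omega
  have hmid : ∀ m, 2 ^ k ≤ m → m < 2 ^ (k+1) → ∃ i < 2 ^ k, a m = c + a i := by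
    intro m hm1 hm2
    refine ⟨m - 2 ^ k, by omega, ?_⟩
    rw [← hblk1 (m - 2 ^ k) (by omega)]
    congr 1; omega
  have hmid2 : ∀ m, 2 ^ (k+1) ≤ m → m < 2 ^ (k+2) → ∃ i < 2 ^ (k+1), a m = 3 * c + a i := by
    intro m hm1 hm2
    refine ⟨m - 2 ^ (k+1), by omega, ?_⟩
    rw [← hblk2 (m - 2 ^ (k+1)) (by omega)]
    congr 1; omega
  have hclass : ∀ v ∈ Set.range a, v < 3 * c → v ∈ Ak ∪ shift Ak c := by
    rintro v ⟨m, rfl⟩ hv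
    rcases lt_or_ge m (2 ^ k) with hm | hm
    · exact Or.inl (hAk ▸ ⟨m, hm, rfl⟩)
    rcases lt_or_ge m (2 ^ (k+1)) with hm2 | hm2
    · obtain ⟨i, hi, he⟩ := hmid m hm hm2
      exact Or.inr ⟨a i, hAk ▸ ⟨i, hi, rfl⟩, show a i + c = a m by omega⟩
    · exact absurd (hhi m hm2) (by omega)
  have hclass2 : ∀ v ∈ Set.range a, 3 * c ≤ v → v < 9 * c →
      ∃ i < 2 ^ (k+1), v = 3 * c + a i := by
    rintro v ⟨m, rfl⟩ h1 h2
    have hm : 2 ^ (k+1) ≤ m := by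
      by_contra h
      have := hlow1 m (by omega); omega
    have hm2 : m < 2 ^ (k+2) := by
      by_contra h
      have := hhi2 m (by omega); omega
    obtain ⟨i, hi, he⟩ := hmid2 m hm hm2
    exact ⟨i, hi, he⟩
  have hAkval : ∀ v ∈ Ak ∪ shift Ak c, 0 ≤ v ∧ v ≤ c + a' := by
    rintro v (hv | ⟨s, hs, rfl⟩)
    · rw [hAk] at hv; obtain ⟨i, hi, rfl⟩ := hv
      have := hlow i hi; have := hnn i; omega
    · rw [hAk] at hs; obtain ⟨i, hi, rfl⟩ := hs
      have := hlow i hi; have := hnn i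
      show 0 ≤ a i + c ∧ a i + c ≤ c + a'
      omega
  have hOle : ∀ w ∈ OSet a, w ≤ a' - lam := by
    intro w hw
    have h1 := oset_bddAbove hA w hw
    omega
  -- the unshifted covering claim
  have key : ∀ v : ℤ,
      ((0 ≤ v ∧ v < 3 * c ∧ v ∉ (Ak ∪ shift Ak c ∪ OSet a)) ∨ (∃ w ∈ OSet a, v = 3 * c + w)) →
      Covers (Ak ∪ shift Ak c) v := by
    intro v hv
    rcases hv with ⟨h0, h3, hnot⟩ | ⟨w, hw, rfl⟩
    · have hvr : v ∉ Set.range a := fun hvr => hnot (Or.inl (hclass v hvr h3))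
      have hvO : v ∉ OSet a := fun h => hnot (Or.inr h)
      have hcov : Covers (Set.range a) v := by
        by_contra hnc
        exact hvO ⟨h0, hvr, hnc⟩
      obtain ⟨y, z', hy, hz', hyz, hzv, he⟩ := hcov
      exact ⟨y, z', hclass y hy (by omega), hclass z' hz' (by omega), hyz, hzv, he⟩
    · obtain ⟨hw0, hwr, hwnc⟩ := hw
      have hwle : w ≤ a' - lam := hOle w ⟨hw0, hwr, hwnc⟩
      have hwc : w < c := by omega
      by_contra hncov
      have hnc : ¬ Covers (Set.range a) (3 * c + w) := by
        rintro ⟨y, z', hy, hz', hyz, hzv, he⟩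
        rcases lt_or_ge z' (3 * c) with hz3 | hz3
        · exact hncov ⟨y, z', hclass y hy (by omega), hclass z' hz' hz3, hyz, hzv, he⟩
        · obtain ⟨j, hj, hje⟩ := hclass2 z' hz' hz3 (by omega)
          have hjw : a j < w := by omega
          have hy0 : 0 ≤ y := by obtain ⟨m, rfl⟩ := hy; exact hnn m
          rcases lt_or_ge y (3 * c) with hy3 | hy3
          · have hym := hAkval y (hclass y hy hy3)
            have hjnn : 0 ≤ a j := hnn j
            omega
          · obtain ⟨i, hi, hie⟩ := hclass2 y hy hy3 (by omega)
            exact hwnc ⟨a i, a j, ⟨i, rfl⟩, ⟨j, rfl⟩, by omega, hjw, by omega⟩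
      have hnr : 3 * c + w ∉ Set.range a := by
        rintro ⟨m, hm⟩
        rcases lt_or_ge m (2 ^ (k+1)) with h1 | h1
        · have := hlow1 m h1; omega
        rcases lt_or_ge m (2 ^ (k+2)) with h2 | h2
        · obtain ⟨i, hi, hie⟩ := hmid2 m h1 h2
          exact hwr ⟨i, by omega⟩
        · have := hhi2 m h2; omega
      have hO : (3 * c + w) ∈ OSet a := ⟨by omega, hnr, hnc⟩
      have := hOle _ hO
      omega
  -- transfer to the shifted statement
  have htrans : ∀ u ∈ Ak ∪ shift Ak c, ∀ x : ℤ, u + x ∈ shift Ak x ∪ shift Ak (c + x) := by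
    rintro u (hu | ⟨s, hs, rfl⟩) x
    · exact Or.inl ⟨u, hu, rfl⟩
    · exact Or.inr ⟨s, hs, show s + (c + x) = s + c + x by ring⟩
  intro x z hz
  have hkey : Covers (Ak ∪ shift Ak c) (z - x) := by
    rcases hz with ⟨hIco, hnshift⟩ | ⟨w, hw, hwe⟩
    · obtain ⟨hz1, hz2⟩ := hIco
      refine key (z - x) (Or.inl ⟨by omega, by omega, fun hvin => hnshift ⟨z - x, hvin, show z - x + x = z by omega⟩⟩)
    · have hwe' : w + (3 * c + x) = z := hwe
      exact key (z - x) (Or.inr ⟨w, hw, by omega⟩)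
  obtain ⟨y, z', hy, hz', h1, h2, h3⟩ := hkey
  exact ⟨y + x, z' + x, htrans y hy x, htrans z' hz' x, by omega, by omega, by omega⟩
end

section
/- Suppose that S(A) = {a_n} and S(B) = {b_n} are independent Stanley sequences and k ≥ κ(A). Let A* = {a_0, a_1, ..., a_{2^k − 1}} and define A ⊗_k B = {a_{2^k}·b + a : a ∈ A*, b ∈ B}. Then S(A ⊗_k B) is an independent Stanley sequence and, as a set, S(A ⊗_k B) = {a_{2^k}·b + a : a ∈ A*, b ∈ S(B)}. -/
namespace StanleyAux

lemma threeFree_mono {S T : Set ℤ} (h : S ⊆ T) (hT : ThreeFreeSet T) : ThreeFreeSet S :=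
  fun x hx y hy z hz => hT x (h hx) y (h hy) z (h hz)

variable {A : Finset ℤ} {a : ℕ → ℤ}

lemma card_pos (hA : IsStanleySeq A a) : 0 < A.card := Finset.card_pos.2 ⟨0, hA.1⟩

lemma enum_image (hA : IsStanleySeq A a) : (Finset.range A.card).image a = A := by
  apply Finset.eq_of_subset_of_card_le
  · intro x hx
    simp only [Finset.mem_image, Finset.mem_range] at hx
    obtain ⟨i, hi, rfl⟩ := hx
    exact hA.2.2.2.2.1 i hi
  · rw [Finset.card_image_of_injective _ hA.2.2.2.1.injective, Finset.card_range]

lemma enum_surj (hA : IsStanleySeq A a) {x : ℤ} (hx : x ∈ A) :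
    ∃ i < A.card, a i = x := by
  have := enum_image hA
  rw [← this] at hx
  simp only [Finset.mem_image, Finset.mem_range] at hx
  obtain ⟨i, hi, rfl⟩ := hx
  exact ⟨i, hi, rfl⟩

lemma a_zero (hA : IsStanleySeq A a) : a 0 = 0 := by
  obtain ⟨i, hi, hai⟩ := enum_surj hA hA.1
  have h0 : 0 ≤ a 0 := hA.2.1 _ (hA.2.2.2.2.1 0 (card_pos hA))
  have : a 0 ≤ a i := hA.2.2.2.1.monotone (Nat.zero_le i)
  omega

lemma a_nonneg (hA : IsStanleySeq A a) (n : ℕ) : 0 ≤ a n := by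
  have := hA.2.2.2.1.monotone (Nat.zero_le n)
  rw [a_zero hA] at this
  exact this

lemma nat_le_a (hA : IsStanleySeq A a) (n : ℕ) : (n : ℤ) ≤ a n := by
  induction n with
  | zero => rw [a_zero hA]; exact le_refl 0
  | succ m ih =>
    have h2 := hA.2.2.2.1 (show m < m + 1 by omega)
    push_cast
    omega

lemma add_one_le (hA : IsStanleySeq A a) {m n : ℕ} (h : m < n) : a m + 1 ≤ a n :=
  Int.add_one_le_iff.2 (hA.2.2.2.1 h)

lemma prefix_free (hA : IsStanleySeq A a) (n : ℕ) : ThreeFreeSet (a '' Set.Iio n) := by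
  rcases le_or_gt n A.card with h | h
  · apply threeFree_mono _ hA.2.2.1
    rintro x ⟨i, hi, rfl⟩
    exact hA.2.2.2.2.1 i (lt_of_lt_of_le hi h)
  · obtain ⟨m, rfl⟩ : ∃ m, n = m + 1 := ⟨n - 1, by omega⟩
    have hfree := (hA.2.2.2.2.2 m (by omega)).1.2
    have himg : a '' Set.Iio (m + 1) = a '' Set.Iio m ∪ {a m} := by
      have : Set.Iio (m + 1) = insert m (Set.Iio m) := by
        ext x; simp [Nat.lt_succ_iff_lt_or_eq]
      rw [this, Set.image_insert_eq, Set.union_singleton]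
    rw [himg]
    exact hfree

lemma range_free (hA : IsStanleySeq A a) : ThreeFreeSet (Set.range a) := by
  rintro x ⟨i, rfl⟩ y ⟨j, rfl⟩ z ⟨l, rfl⟩ hxy hyz
  have hfree := prefix_free hA (i + j + l + 1)
  exact hfree _ ⟨i, Set.mem_Iio.2 (by omega), rfl⟩ _ ⟨j, Set.mem_Iio.2 (by omega), rfl⟩ _
    ⟨l, Set.mem_Iio.2 (by omega), rfl⟩ hxy hyz

lemma cover_gap (hA : IsStanleySeq A a) {n : ℕ} (hn : A.card ≤ n) {v : ℤ}
    (h1 : a (n - 1) < v) (h2 : v < a n) :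
    ∃ i j, i < n ∧ j < n ∧ a i < a j ∧ a j < v ∧ a i + v = 2 * a j := by
  have hg := hA.2.2.2.2.2 n hn
  have hn1 : 1 ≤ n := le_trans (card_pos hA) hn
  have hnf : ¬ ThreeFreeSet (a '' Set.Iio n ∪ {v}) := by
    intro h
    exact absurd (hg.2 ⟨h1, h⟩) (not_le.2 h2)
  unfold ThreeFreeSet at hnf
  push_neg at hnf
  obtain ⟨x, hx, y, hy, z, hz, hxy, hyz, hsum⟩ := hnf
  have himg : ∀ u : ℤ, u ∈ a '' Set.Iio n ∪ {v} → u ≠ v → ∃ i < n, a i = u ∧ u < v := by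
    rintro u (⟨i, hi, rfl⟩ | hu) hne
    · have hi' : i < n := hi
      refine ⟨i, hi', rfl, ?_⟩
      have hle : a i ≤ a (n - 1) := hA.2.2.2.1.monotone (by omega)
      omega
    · exact absurd hu hne
  by_cases hzv : z = v
  · have hxv : x ≠ v := by intro h; omega
    have hyv : y ≠ v := by intro h; omega
    obtain ⟨i, hi, hieq, _⟩ := himg x hx hxv
    obtain ⟨j, hj, hjeq, hjv⟩ := himg y hy hyv
    exact ⟨i, j, hi, hj, by omega, by omega, by omega⟩
  · exfalso
    obtain ⟨l, hl, hleq, hlv⟩ := himg z hz hzv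
    have hxv : x ≠ v := by intro h; omega
    have hyv : y ≠ v := by intro h; omega
    obtain ⟨i, hi, hieq, _⟩ := himg x hx hxv
    obtain ⟨j, hj, hjeq, _⟩ := himg y hy hyv
    exact prefix_free hA n _ ⟨i, Set.mem_Iio.2 hi, hieq⟩ _ ⟨j, Set.mem_Iio.2 hj, hjeq⟩ _
      ⟨l, Set.mem_Iio.2 hl, hleq⟩ hxy hyz hsum

end StanleyAux
namespace StanleyAux

variable {A : Finset ℤ} {a : ℕ → ℤ} {lam : ℤ} {κ : ℕ}

lemma shift_eq (hI : IndepParams a lam κ) {k : ℕ} (hk : κ ≤ k) {i : ℕ} (hi : i < 2 ^ k) :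
    a (2 ^ k + i) = a (2 ^ k) + a i := (hI k hk).1 i hi

lemma rec_eq (hI : IndepParams a lam κ) {k : ℕ} (hk : κ ≤ k) :
    a (2 ^ k) = 2 * a (2 ^ k - 1) + 1 - lam := (hI k hk).2

lemma pow_pos' (k : ℕ) : 1 ≤ 2 ^ k := Nat.one_le_two_pow

lemma M_lt_rho (hA : IsStanleySeq A a) (k : ℕ) : a (2 ^ k - 1) < a (2 ^ k) :=
  hA.2.2.2.1 (by have := pow_pos' k; omega)

lemma lam_le_M (hA : IsStanleySeq A a) (hI : IndepParams a lam κ) {k : ℕ} (hk : κ ≤ k) :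
    lam ≤ a (2 ^ k - 1) := by
  have h1 := rec_eq hI hk
  have h2 := M_lt_rho hA k
  omega

lemma M_succ (hI : IndepParams a lam κ) {k : ℕ} (hk : κ ≤ k) :
    a (2 ^ (k + 1) - 1) = a (2 ^ k) + a (2 ^ k - 1) := by
  have hp := pow_pos' k
  have h2 : 2 ^ (k + 1) = 2 * 2 ^ k := by rw [pow_succ]; ring
  have hidx : 2 ^ (k + 1) - 1 = 2 ^ k + (2 ^ k - 1) := by omega
  rw [hidx]
  exact shift_eq hI hk (by omega)

lemma rho_succ (hA : IsStanleySeq A a) (hI : IndepParams a lam κ) {k : ℕ} (hk : κ ≤ k) :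
    a (2 ^ (k + 1)) = 3 * a (2 ^ k) := by
  have h1 := rec_eq hI (show κ ≤ k + 1 by omega)
  have h2 := M_succ hI hk
  have h3 := rec_eq hI hk
  omega

lemma O_cover (hA : IsStanleySeq A a) (hI : IndepParams a lam κ) {w : ℤ} (hw0 : 0 ≤ w)
    (hwr : w ∉ Set.range a)
    (hwc : ¬ ∃ i j, a i < a j ∧ a j < w ∧ a i + w = 2 * a j) :
    ∀ k, κ ≤ k → ∃ i₁ i₂, i₁ < 2 ^ k ∧ i₂ < 2 ^ k ∧ a i₁ + (a (2 ^ k) + w) = 2 * a i₂ := by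
  intro k hk
  set K : ℕ := k + A.card + (w + lam).toNat + w.toNat + 1 with hK
  have hKk : k ≤ K := by omega
  have hKκ : κ ≤ K := le_trans hk hKk
  have hKcard : A.card ≤ 2 ^ K := by
    have := Nat.lt_two_pow_self (n := K); omega
  have hMK : (K : ℤ) ≤ a (2 ^ K - 1) := by
    have h1 := nat_le_a hA (2 ^ K - 1)
    have h2 := Nat.lt_two_pow_self (n := K)
    have h3 : (K : ℤ) ≤ ((2 ^ K - 1 : ℕ) : ℤ) := by push_cast; omega
    omega
  have hcast : ((K : ℕ) : ℤ) = (k : ℤ) + A.card + (w + lam).toNat + w.toNat + 1 := by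
    rw [hK]; push_cast; ring
  have ht1 : w + lam ≤ ((w + lam).toNat : ℤ) := Int.self_le_toNat _
  have ht2 : w ≤ (w.toNat : ℤ) := Int.self_le_toNat _
  have hc0 : (0 : ℤ) ≤ A.card := Int.natCast_nonneg _
  have hk0 : (0 : ℤ) ≤ k := Int.natCast_nonneg _
  have ht1' : (0 : ℤ) ≤ (w + lam).toNat := Int.natCast_nonneg _
  have ht2' : (0 : ℤ) ≤ w.toNat := Int.natCast_nonneg _
  have hMw1 : w + lam ≤ a (2 ^ K - 1) := by omega
  have hMw2 : w < a (2 ^ K - 1) := by omega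
  clear hcast ht1 ht2 hc0 hk0 ht1' ht2' hMK
  -- base case at K
  have base : ∃ i₁ i₂, i₁ < 2 ^ K ∧ i₂ < 2 ^ K ∧ a i₁ + (a (2 ^ K) + w) = 2 * a i₂ := by
    have hw0' : 0 < w := by
      rcases lt_or_eq_of_le hw0 with h | h
      · exact h
      · exfalso; exact hwr ⟨0, by rw [a_zero hA]; omega⟩
    have hex : ∃ n, w < a n := by
      refine ⟨(w + 1).toNat, ?_⟩
      have h1 := nat_le_a hA (w + 1).toNat
      have h2 : w + 1 ≤ ((w + 1).toNat : ℤ) := Int.self_le_toNat _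
      omega
    obtain ⟨r, hra, hrmin⟩ : ∃ r, w < a r ∧ ∀ m, m < r → ¬ w < a m :=
      ⟨Nat.find hex, Nat.find_spec hex, fun m hm => Nat.find_min hex hm⟩
    have hr1 : 1 ≤ r := by
      by_contra h
      have hr0 : r = 0 := by omega
      rw [hr0, a_zero hA] at hra
      omega
    have hr_lt : a (r - 1) < w := by
      have h1 : ¬ w < a (r - 1) := hrmin _ (by omega)
      have h2 : a (r - 1) ≠ w := fun h => hwr ⟨r - 1, h⟩
      omega
    have hpK := pow_pos' K
    have hrK : r ≤ 2 ^ K - 1 := by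
      have h1 : a (r - 1) < a (2 ^ K - 1) := by omega
      have h2 := (hA.2.2.2.1.lt_iff_lt).1 h1
      omega
    have hcard : A.card ≤ 2 ^ K + r := by omega
    have hidx1 : 2 ^ K + r - 1 = 2 ^ K + (r - 1) := by omega
    have e1 : a (2 ^ K + r - 1) = a (2 ^ K) + a (r - 1) := by
      rw [hidx1]; exact shift_eq hI hKκ (by omega)
    have e2 : a (2 ^ K + r) = a (2 ^ K) + a r := shift_eq hI hKκ (by omega)
    obtain ⟨α, γ, hα, hγ, hyz, hzv, hsum⟩ :=
      cover_gap hA hcard (v := a (2 ^ K) + w) (by omega) (by omega)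
    by_cases hc : γ < 2 ^ K
    · have hαK : α < 2 ^ K := by
        have h1 : a γ ≤ a (2 ^ K - 1) := hA.2.2.2.1.monotone (by omega)
        have h2 := M_lt_rho hA K
        have h3 : a α < a (2 ^ K) := by omega
        exact (hA.2.2.2.1.lt_iff_lt).1 h3
      exact ⟨α, γ, hαK, hc, hsum⟩
    · push_neg at hc
      have hγ2 : γ - 2 ^ K < 2 ^ K := by omega
      have hγeq : a γ = a (2 ^ K) + a (γ - 2 ^ K) := by
        have h5 : γ = 2 ^ K + (γ - 2 ^ K) := by omega
        conv_lhs => rw [h5]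
        exact shift_eq hI hKκ hγ2
      by_cases hc2 : α < 2 ^ K
      · exfalso
        have hαM : a α ≤ a (2 ^ K - 1) := hA.2.2.2.1.monotone (by omega)
        have hrec := rec_eq hI hKκ
        have hj0 : 0 ≤ a (γ - 2 ^ K) := a_nonneg hA _
        omega
      · exfalso
        push_neg at hc2
        have hαK2 : α - 2 ^ K < 2 ^ K := by omega
        have hαeq : a α = a (2 ^ K) + a (α - 2 ^ K) := by
          have h5 : α = 2 ^ K + (α - 2 ^ K) := by omega
          conv_lhs => rw [h5]
          exact shift_eq hI hKκ hαK2
        exact hwc ⟨α - 2 ^ K, γ - 2 ^ K, by omega, by omega, by omega⟩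
  -- descent step
  have desc : ∀ m, κ ≤ m →
      (∃ i₁ i₂, i₁ < 2 ^ (m + 1) ∧ i₂ < 2 ^ (m + 1) ∧
        a i₁ + (a (2 ^ (m + 1)) + w) = 2 * a i₂) →
      ∃ i₁ i₂, i₁ < 2 ^ m ∧ i₂ < 2 ^ m ∧ a i₁ + (a (2 ^ m) + w) = 2 * a i₂ := by
    rintro m hm ⟨i₁, i₂, h₁, h₂, hsum⟩
    have hp := pow_pos' m
    have h2 : 2 ^ (m + 1) = 2 * 2 ^ m := by rw [pow_succ]; ring
    have hρ3 := rho_succ hA hI hm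
    have hMs := M_succ hI hm
    have hrec := rec_eq hI hm
    have hi₂M : a i₂ ≤ a (2 ^ (m + 1) - 1) := hA.2.2.2.1.monotone (by omega)
    have hi₁0 : 0 ≤ a i₁ := a_nonneg hA i₁
    have hρpos : 1 ≤ a (2 ^ m) := by
      have h4 := nat_le_a hA (2 ^ m)
      have h5 : (1 : ℤ) ≤ ((2 ^ m : ℕ) : ℤ) := by exact_mod_cast pow_pos' m
      omega
    have hlam := lam_le_M hA hI hm
    have hai₁ : a i₁ < a (2 ^ m) := by omega
    have hi₁m : i₁ < 2 ^ m := (hA.2.2.2.1.lt_iff_lt).1 hai₁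
    have hai₂ : a (2 ^ m) < a i₂ := by omega
    have hi₂m : 2 ^ m < i₂ := (hA.2.2.2.1.lt_iff_lt).1 hai₂
    have hjm : i₂ - 2 ^ m < 2 ^ m := by omega
    have hγeq : a i₂ = a (2 ^ m) + a (i₂ - 2 ^ m) := by
      have h5 : i₂ = 2 ^ m + (i₂ - 2 ^ m) := by omega
      conv_lhs => rw [h5]
      exact shift_eq hI hm hjm
    exact ⟨i₁, i₂ - 2 ^ m, hi₁m, hjm, by omega⟩
  -- downward induction from K to k
  have main : ∀ d, d ≤ K - k →
      ∃ i₁ i₂, i₁ < 2 ^ (K - d) ∧ i₂ < 2 ^ (K - d) ∧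
        a i₁ + (a (2 ^ (K - d)) + w) = 2 * a i₂ := by
    intro d
    induction d with
    | zero => intro _; simpa using base
    | succ d ih =>
      intro hd
      have h1 : K - (d + 1) + 1 = K - d := by omega
      have h2 : κ ≤ K - (d + 1) := by omega
      have h3 := ih (by omega)
      rw [← h1] at h3
      exact desc (K - (d + 1)) h2 h3
  have hfin := main (K - k) (le_refl _)
  have hKk' : K - (K - k) = k := by omega
  rw [hKk'] at hfin
  exact hfin

lemma gap_top (hA : IsStanleySeq A a) (hI : IndepParams a lam κ) {k : ℕ} (hk : κ ≤ k)
    {w : ℤ} (h1 : a (2 ^ k - 1) < w) (h2 : w < a (2 ^ k)) :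
    ∃ i j, i < 2 ^ k ∧ j < 2 ^ k ∧ a i < a j ∧ a j < w ∧ a i + w = 2 * a j := by
  have hp := pow_pos' k
  have hw0 : 0 ≤ w := by
    have := a_nonneg hA (2 ^ k - 1); omega
  have hwr : w ∉ Set.range a := by
    rintro ⟨t, rfl⟩
    have l1 : 2 ^ k - 1 < t := (hA.2.2.2.1.lt_iff_lt).1 h1
    have l2 : t < 2 ^ k := (hA.2.2.2.1.lt_iff_lt).1 h2
    omega
  by_cases hwc : ∃ i j, a i < a j ∧ a j < w ∧ a i + w = 2 * a j
  · obtain ⟨i, j, hij, hjw, hsum⟩ := hwc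
    have hjk : j < 2 ^ k := (hA.2.2.2.1.lt_iff_lt).1 (by omega : a j < a (2 ^ k))
    have hik : i < j := (hA.2.2.2.1.lt_iff_lt).1 hij
    exact ⟨i, j, by omega, hjk, hij, hjw, hsum⟩
  · exfalso
    obtain ⟨i₁, i₂, hi₁, hi₂, hsum⟩ := O_cover hA hI hw0 hwr hwc k hk
    have hM2 : a i₂ ≤ a (2 ^ k - 1) := hA.2.2.2.1.monotone (by omega)
    have h0 : 0 ≤ a i₁ := a_nonneg hA i₁
    have hrec := rec_eq hI hk
    have hlam := lam_le_M hA hI hk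
    omega

end StanleyAux
namespace StanleyAux

/-- The product sequence. -/
def prodSeq (a b : ℕ → ℤ) (k : ℕ) : ℕ → ℤ :=
  fun n => a (2 ^ k) * b (n / 2 ^ k) + a (n % 2 ^ k)

variable {A B : Finset ℤ} {a b : ℕ → ℤ} {lamA lamB : ℤ} {κA κB k : ℕ}

lemma a_le_M (hA : IsStanleySeq A a) {i : ℕ} (hi : i < 2 ^ k) :
    a i ≤ a (2 ^ k - 1) :=
  hA.2.2.2.1.monotone (by omega)

lemma prod_threeFree (hA : IsStanleySeq A a) (hIA : IndepParams a lamA κA) (hkA : κA ≤ k)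
    (T : Set ℤ) (hT : ThreeFreeSet T) :
    ThreeFreeSet {v : ℤ | ∃ β ∈ T, ∃ i < 2 ^ k, v = a (2 ^ k) * β + a i} := by
  rintro x ⟨β₁, hβ₁, i₁, hi₁, rfl⟩ y ⟨β₂, hβ₂, i₂, hi₂, rfl⟩ z ⟨β₃, hβ₃, i₃, hi₃, rfl⟩ hxy hyz heq
  set ρ : ℤ := a (2 ^ k) with hρdef
  set M : ℤ := a (2 ^ k - 1) with hMdef
  have hρM : M < ρ := M_lt_rho hA k
  have h₁M : a i₁ ≤ M := a_le_M hA hi₁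
  have h₂M : a i₂ ≤ M := a_le_M hA hi₂
  have h₃M : a i₃ ≤ M := a_le_M hA hi₃
  have h₁0 : 0 ≤ a i₁ := a_nonneg hA i₁
  have h₂0 : 0 ≤ a i₂ := a_nonneg hA i₂
  have h₃0 : 0 ≤ a i₃ := a_nonneg hA i₃
  have hρ0 : 0 < ρ := by omega
  have hd : ρ * (β₁ + β₃ - 2 * β₂) = 2 * a i₂ - a i₁ - a i₃ := by linear_combination heq
  have hdlt : β₁ + β₃ - 2 * β₂ < 2 := by
    by_contra h
    push_neg at h
    have : ρ * 2 ≤ ρ * (β₁ + β₃ - 2 * β₂) := mul_le_mul_of_nonneg_left h hρ0.le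
    omega
  have hdgt : -2 < β₁ + β₃ - 2 * β₂ := by
    by_contra h
    push_neg at h
    have : ρ * (β₁ + β₃ - 2 * β₂) ≤ ρ * (-2) := mul_le_mul_of_nonneg_left h hρ0.le
    omega
  have hd3 : β₁ + β₃ - 2 * β₂ = -1 ∨ β₁ + β₃ - 2 * β₂ = 0 ∨ β₁ + β₃ - 2 * β₂ = 1 := by omega
  rcases hd3 with hd0 | hd0 | hd0
  · -- d = -1 : use a i₃ < a (2^k + i₂) < a (2^k + i₁)
    rw [hd0] at hd
    have hs₁ : a (2 ^ k + i₁) = ρ + a i₁ := shift_eq hIA hkA hi₁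
    have hs₂ : a (2 ^ k + i₂) = ρ + a i₂ := shift_eq hIA hkA hi₂
    refine range_free hA (a i₃) ⟨i₃, rfl⟩ (a (2 ^ k + i₂)) ⟨2 ^ k + i₂, rfl⟩
      (a (2 ^ k + i₁)) ⟨2 ^ k + i₁, rfl⟩ (by omega) (by omega) (by omega)
  · -- d = 0
    rw [hd0] at hd
    have hb12 : β₁ ≤ β₂ := by
      by_contra h
      push_neg at h
      have : ρ * 1 ≤ ρ * (β₁ - β₂) := mul_le_mul_of_nonneg_left (by omega) hρ0.le
      have hx : ρ * β₁ - ρ * β₂ = ρ * (β₁ - β₂) := by ring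
      omega
    have hb23 : β₂ ≤ β₃ := by
      by_contra h
      push_neg at h
      have : ρ * 1 ≤ ρ * (β₂ - β₃) := mul_le_mul_of_nonneg_left (by omega) hρ0.le
      have hx : ρ * β₂ - ρ * β₃ = ρ * (β₂ - β₃) := by ring
      omega
    rcases eq_or_lt_of_le hb12 with heq12 | hlt12
    · -- all β equal, AP in a
      have hβ3 : β₃ = β₂ := by omega
      rw [← heq12] at hxy hyz
      rw [hβ3, ← heq12] at hyz heq
      have ha12 : a i₁ < a i₂ := by omega
      have ha23 : a i₂ < a i₃ := by omega
      exact range_free hA (a i₁) ⟨i₁, rfl⟩ (a i₂) ⟨i₂, rfl⟩ (a i₃) ⟨i₃, rfl⟩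
        ha12 ha23 (by omega)
    · -- AP in T
      have hlt23 : β₂ < β₃ := by omega
      exact hT β₁ hβ₁ β₂ hβ₂ β₃ hβ₃ hlt12 hlt23 (by omega)
  · -- d = 1 : use a i₃ < a i₂ < a (2^k + i₁)
    rw [hd0] at hd
    have hs₁ : a (2 ^ k + i₁) = ρ + a i₁ := shift_eq hIA hkA hi₁
    refine range_free hA (a i₃) ⟨i₃, rfl⟩ (a i₂) ⟨i₂, rfl⟩
      (a (2 ^ k + i₁)) ⟨2 ^ k + i₁, rfl⟩ (by omega) (by omega) (by omega)

lemma prodSeq_eval (a b : ℕ → ℤ) (k : ℕ) {q r : ℕ} (hr : r < 2 ^ k) :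
    prodSeq a b k (2 ^ k * q + r) = a (2 ^ k) * b q + a r := by
  have hp := pow_pos' k
  have hdiv : (2 ^ k * q + r) / 2 ^ k = q := by
    rw [Nat.mul_add_div (by omega), Nat.div_eq_of_lt hr]; omega
  have hmod : (2 ^ k * q + r) % 2 ^ k = r := by
    rw [Nat.mul_add_mod, Nat.mod_eq_of_lt hr]
  unfold prodSeq
  rw [hdiv, hmod]

lemma prodSeq_def' (a b : ℕ → ℤ) (k : ℕ) (n : ℕ) :
    prodSeq a b k n = a (2 ^ k) * b (n / 2 ^ k) + a (n % 2 ^ k) := rfl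

lemma b_gap (hB : IsStanleySeq B b) {q : ℕ} (hq : 1 ≤ q) : b (q - 1) + 1 ≤ b q :=
  add_one_le hB (by omega)

lemma prodSeq_mono (hA : IsStanleySeq A a) (hB : IsStanleySeq B b) (k : ℕ) :
    StrictMono (prodSeq a b k) := by
  have hp := pow_pos' k
  have hρM := M_lt_rho hA k
  have hρ0 : 0 < a (2 ^ k) := by
    have := a_nonneg hA (2 ^ k - 1); omega
  apply strictMono_nat_of_lt_succ
  intro n
  obtain ⟨q, r, hrk, rfl⟩ : ∃ q r, r < 2 ^ k ∧ n = 2 ^ k * q + r :=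
    ⟨n / 2 ^ k, n % 2 ^ k, Nat.mod_lt _ (by omega), (Nat.div_add_mod n (2 ^ k)).symm⟩
  by_cases hc : r + 1 < 2 ^ k
  · have e1 := prodSeq_eval a b k (q := q) hrk
    have e2 : prodSeq a b k (2 ^ k * q + r + 1) = a (2 ^ k) * b q + a (r + 1) := by
      have : 2 ^ k * q + r + 1 = 2 ^ k * q + (r + 1) := by omega
      rw [this]; exact prodSeq_eval a b k hc
    have := hA.2.2.2.1 (show r < r + 1 by omega)
    omega
  · have hr2 : r = 2 ^ k - 1 := by omega
    have e1 := prodSeq_eval a b k (q := q) hrk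
    have e2 : prodSeq a b k (2 ^ k * q + r + 1) = a (2 ^ k) * b (q + 1) + a 0 := by
      have h5 : 2 ^ k * q + r + 1 = 2 ^ k * (q + 1) + 0 := by
        have : 2 ^ k * (q + 1) = 2 ^ k * q + 2 ^ k := by ring
        omega
      rw [h5]; exact prodSeq_eval a b k (by omega)
    rw [e1, e2, a_zero hA]
    have hbq : b q + 1 ≤ b (q + 1) := add_one_le hB (by omega)
    have hρle : a (2 ^ k) * (b q + 1) ≤ a (2 ^ k) * b (q + 1) :=
      mul_le_mul_of_nonneg_left hbq hρ0.le
    have haM : a r ≤ a (2 ^ k - 1) := a_le_M hA (by omega)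
    nlinarith
end StanleyAux
namespace StanleyAux

variable {A B : Finset ℤ} {a b : ℕ → ℤ} {lamA lamB : ℤ} {κA κB k : ℕ}

lemma a_tri (hA : IsStanleySeq A a) (hIA : IndepParams a lamA κA) (hkA : κA ≤ k)
    {w : ℤ} (hw0 : 0 ≤ w) (hlt : w < a (2 ^ k)) :
    (∃ j < 2 ^ k, w = a j) ∨
    (∃ i j, i < 2 ^ k ∧ j < 2 ^ k ∧ a i < a j ∧ a j < w ∧ a i + w = 2 * a j) ∨
    (∃ i₁ i₂, i₁ < 2 ^ k ∧ i₂ < 2 ^ k ∧ a i₁ + (a (2 ^ k) + w) = 2 * a i₂) := by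
  by_cases hr : w ∈ Set.range a
  · obtain ⟨t, rfl⟩ := hr
    exact Or.inl ⟨t, (hA.2.2.2.1.lt_iff_lt).1 hlt, rfl⟩
  · by_cases hc : ∃ i j, a i < a j ∧ a j < w ∧ a i + w = 2 * a j
    · obtain ⟨i, j, hij, hjw, hsum⟩ := hc
      have hj : j < 2 ^ k := (hA.2.2.2.1.lt_iff_lt).1 (by omega : a j < a (2 ^ k))
      have hi : i < j := (hA.2.2.2.1.lt_iff_lt).1 hij
      exact Or.inr (Or.inl ⟨i, j, by omega, hj, hij, hjw, hsum⟩)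
    · exact Or.inr (Or.inr (O_cover hA hIA hw0 hr hc k hkA))

lemma b_step (hB : IsStanleySeq B b) {q : ℕ} (hq : B.card ≤ q) {c : ℤ}
    (hc1 : b (q - 1) ≤ c - 1) (hc2 : c ≤ b q) :
    ∃ m₁ m₂, m₁ < q ∧ m₂ < q ∧ b m₁ + c = 2 * b m₂ + 1 ∧ b m₂ ≤ c - 1 ∧
      (b m₁ = b m₂ ∨ b m₁ < b m₂) := by
  have hq1 : 1 ≤ q := le_trans (card_pos hB) hq
  by_cases h : c - 1 = b (q - 1)
  · exact ⟨q - 1, q - 1, by omega, by omega, by omega, by omega, Or.inl rfl⟩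
  · have hgap : b (q - 1) < c - 1 := by omega
    have hcb : c - 1 < b q := by
      have := b_gap hB hq1; omega
    obtain ⟨m₁, m₂, hm₁, hm₂, hlt, hltc, hsum⟩ := cover_gap hB hq hgap hcb
    exact ⟨m₁, m₂, hm₁, hm₂, by omega, by omega, Or.inr hlt⟩

lemma main_cover (hA : IsStanleySeq A a) (hB : IsStanleySeq B b)
    (hIA : IndepParams a lamA κA) (hkA : κA ≤ k)
    {n : ℕ} (hn : 2 ^ k * B.card ≤ n) {v : ℤ}
    (h1 : prodSeq a b k (n - 1) < v) (h2 : v < prodSeq a b k n) :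
    ∃ j₁ j₂, j₁ < n ∧ j₂ < n ∧ prodSeq a b k j₁ < prodSeq a b k j₂ ∧
      prodSeq a b k j₂ < v ∧ prodSeq a b k j₁ + v = 2 * prodSeq a b k j₂ := by
  have hp := pow_pos' k
  have hBc := card_pos hB
  have hρM : a (2 ^ k - 1) < a (2 ^ k) := M_lt_rho hA k
  have hM0 : 0 ≤ a (2 ^ k - 1) := a_nonneg hA _
  have hρ0 : 0 < a (2 ^ k) := by omega
  obtain ⟨q, r, hrk, rfl⟩ : ∃ q r, r < 2 ^ k ∧ n = 2 ^ k * q + r :=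
    ⟨n / 2 ^ k, n % 2 ^ k, Nat.mod_lt _ (by omega), (Nat.div_add_mod n (2 ^ k)).symm⟩
  have hqB : B.card ≤ q := by
    by_contra h
    push_neg at h
    have h5 : 2 ^ k * (q + 1) ≤ 2 ^ k * B.card := Nat.mul_le_mul_left _ (by omega)
    have h6 : 2 ^ k * (q + 1) = 2 ^ k * q + 2 ^ k := by ring
    omega
  have hq1 : 1 ≤ q := le_trans hBc hqB
  have hsplit : 2 ^ k * q = 2 ^ k * (q - 1) + 2 ^ k := by
    have h7 : q - 1 + 1 = q := by omega
    calc 2 ^ k * q = 2 ^ k * (q - 1 + 1) := by rw [h7]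
      _ = 2 ^ k * (q - 1) + 2 ^ k := by ring
  have en := prodSeq_eval a b k (q := q) hrk
  by_cases hr : 1 ≤ r
  · -- within-block gap
    have en1 : prodSeq a b k (2 ^ k * q + r - 1) = a (2 ^ k) * b q + a (r - 1) := by
      have h5 : 2 ^ k * q + r - 1 = 2 ^ k * q + (r - 1) := by omega
      rw [h5]; exact prodSeq_eval a b k (by omega)
    rw [en1] at h1
    rw [en] at h2
    obtain ⟨w, rfl⟩ : ∃ w, v = a (2 ^ k) * b q + w := ⟨v - a (2 ^ k) * b q, by ring⟩
    have hw1 : a (r - 1) < w := by omega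
    have hw2 : w < a r := by omega
    have hw0 : 0 ≤ w := by
      have := a_nonneg hA (r - 1); omega
    have hwρ : w < a (2 ^ k) := by
      have := a_le_M hA hrk
      omega
    rcases a_tri hA hIA hkA hw0 hwρ with ⟨j, hjk, hjw⟩ | ⟨i, j, hik, hjk, hij, hjw, hsum⟩ |
      ⟨i₁, i₂, hi₁, hi₂, hsum⟩
    · exfalso
      have l1 : r - 1 < j := (hA.2.2.2.1.lt_iff_lt).1 (by omega : a (r - 1) < a j)
      have l2 : j < r := (hA.2.2.2.1.lt_iff_lt).1 (by omega : a j < a r)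
      omega
    · -- w covered within block
      have hjr : j < r := (hA.2.2.2.1.lt_iff_lt).1 (by omega : a j < a r)
      have hijn : i < j := (hA.2.2.2.1.lt_iff_lt).1 hij
      refine ⟨2 ^ k * q + i, 2 ^ k * q + j, by omega, by omega, ?_⟩
      have ei := prodSeq_eval a b k (q := q) (show i < 2 ^ k by omega)
      have ej := prodSeq_eval a b k (q := q) (show j < 2 ^ k by omega)
      rw [ei, ej]
      refine ⟨by omega, by omega, by omega⟩
    · -- w in O(A) : cross-block covering
      obtain ⟨m₁, m₂, hm₁q, hm₂q, hbsum, hm₂le, hbcase⟩ :=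
        b_step hB hqB (c := b q) (by have := b_gap hB hq1; omega) (le_refl _)
      have hj₁ : 2 ^ k * m₁ + i₁ < 2 ^ k * q + r := by
        have h5 : 2 ^ k * (m₁ + 1) ≤ 2 ^ k * q := Nat.mul_le_mul_left _ (by omega)
        have h6 : 2 ^ k * (m₁ + 1) = 2 ^ k * m₁ + 2 ^ k := by ring
        omega
      have hj₂ : 2 ^ k * m₂ + i₂ < 2 ^ k * q + r := by
        have h5 : 2 ^ k * (m₂ + 1) ≤ 2 ^ k * q := Nat.mul_le_mul_left _ (by omega)
        have h6 : 2 ^ k * (m₂ + 1) = 2 ^ k * m₂ + 2 ^ k := by ring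
        omega
      refine ⟨2 ^ k * m₁ + i₁, 2 ^ k * m₂ + i₂, hj₁, hj₂, ?_⟩
      have e₁ := prodSeq_eval a b k (q := m₁) hi₁
      have e₂ := prodSeq_eval a b k (q := m₂) hi₂
      rw [e₁, e₂]
      have hi₁M : a i₁ ≤ a (2 ^ k - 1) := a_le_M hA hi₁
      have hi₂M : a i₂ ≤ a (2 ^ k - 1) := a_le_M hA hi₂
      have hi₁0 : 0 ≤ a i₁ := a_nonneg hA i₁
      have hi₂0 : 0 ≤ a i₂ := a_nonneg hA i₂
      refine ⟨?_, ?_, by linear_combination a (2 ^ k) * hbsum + hsum⟩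
      · rcases hbcase with hbe | hbl
        · rw [hbe]; omega
        · have h7 : a (2 ^ k) * 1 ≤ a (2 ^ k) * (b m₂ - b m₁) :=
            mul_le_mul_of_nonneg_left (by omega) hρ0.le
          have h8 : a (2 ^ k) * (b m₂ - b m₁) = a (2 ^ k) * b m₂ - a (2 ^ k) * b m₁ := by ring
          omega
      · have h7 : a (2 ^ k) * b m₂ ≤ a (2 ^ k) * (b q - 1) :=
          mul_le_mul_of_nonneg_left hm₂le hρ0.le
        have h8 : a (2 ^ k) * (b q - 1) = a (2 ^ k) * b q - a (2 ^ k) := by ring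
        omega
  · -- between-block gap : r = 0
    have hr0 : r = 0 := by omega
    subst hr0
    have en1 : prodSeq a b k (2 ^ k * q + 0 - 1) = a (2 ^ k) * b (q - 1) + a (2 ^ k - 1) := by
      have h5 : 2 ^ k * q + 0 - 1 = 2 ^ k * (q - 1) + (2 ^ k - 1) := by omega
      rw [h5]; exact prodSeq_eval a b k (by omega)
    rw [en1] at h1
    rw [en, a_zero hA, add_zero] at h2
    have hb0 : ∀ m, 0 ≤ b m := a_nonneg hB
    obtain ⟨c, w, hw0, hwρ, rfl⟩ :
        ∃ c w, 0 ≤ w ∧ w < a (2 ^ k) ∧ v = a (2 ^ k) * c + w :=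
      ⟨v / a (2 ^ k), v % a (2 ^ k), Int.emod_nonneg v (by omega),
        Int.emod_lt_of_pos v hρ0, (Int.mul_ediv_add_emod v (a (2 ^ k))).symm⟩
    have hcbq : c < b q := by
      by_contra h
      push_neg at h
      have h5 : a (2 ^ k) * b q ≤ a (2 ^ k) * c := mul_le_mul_of_nonneg_left h hρ0.le
      omega
    have hcq1 : b (q - 1) ≤ c := by
      by_contra h
      push_neg at h
      have h7 : a (2 ^ k) * (c + 1) ≤ a (2 ^ k) * b (q - 1) :=
        mul_le_mul_of_nonneg_left (by omega) hρ0.le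
      have h8 : a (2 ^ k) * (c + 1) = a (2 ^ k) * c + a (2 ^ k) := by ring
      omega
    by_cases hcc : c = b (q - 1)
    · -- top gap inside the last block
      subst hcc
      have hwM : a (2 ^ k - 1) < w := by omega
      obtain ⟨i, j, hik, hjk, hij, hjw, hsum⟩ := gap_top hA hIA hkA hwM hwρ
      refine ⟨2 ^ k * (q - 1) + i, 2 ^ k * (q - 1) + j, by omega, by omega, ?_⟩
      have e₁ := prodSeq_eval a b k (q := q - 1) hik
      have e₂ := prodSeq_eval a b k (q := q - 1) hjk
      rw [e₁, e₂]
      exact ⟨by omega, by omega, by omega⟩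
    · -- c strictly between b (q-1) and b q
      have hcgap : b (q - 1) < c := by
        rcases lt_or_eq_of_le hcq1 with h | h
        · exact h
        · exact absurd h.symm hcc
      rcases a_tri hA hIA hkA hw0 hwρ with ⟨j, hjk, hjw⟩ | ⟨i, j, hik, hjk, hij, hjw, hsum⟩ |
        ⟨i₁, i₂, hi₁, hi₂, hsum⟩
      · -- w = a j : cover via AP in b at same offset
        obtain ⟨m₁, m₂, hm₁q, hm₂q, hblt, hbc, hbsum⟩ := cover_gap hB hqB hcgap hcbq
        have hj₁ : 2 ^ k * m₁ + j < 2 ^ k * q + 0 := by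
          have h5 : 2 ^ k * (m₁ + 1) ≤ 2 ^ k * q := Nat.mul_le_mul_left _ (by omega)
          have h6 : 2 ^ k * (m₁ + 1) = 2 ^ k * m₁ + 2 ^ k := by ring
          omega
        have hj₂ : 2 ^ k * m₂ + j < 2 ^ k * q + 0 := by
          have h5 : 2 ^ k * (m₂ + 1) ≤ 2 ^ k * q := Nat.mul_le_mul_left _ (by omega)
          have h6 : 2 ^ k * (m₂ + 1) = 2 ^ k * m₂ + 2 ^ k := by ring
          omega
        refine ⟨2 ^ k * m₁ + j, 2 ^ k * m₂ + j, hj₁, hj₂, ?_⟩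
        have e₁ := prodSeq_eval a b k (q := m₁) hjk
        have e₂ := prodSeq_eval a b k (q := m₂) hjk
        rw [e₁, e₂]
        have h7 : a (2 ^ k) * 1 ≤ a (2 ^ k) * (b m₂ - b m₁) :=
          mul_le_mul_of_nonneg_left (by omega) hρ0.le
        have h8 : a (2 ^ k) * (b m₂ - b m₁) = a (2 ^ k) * b m₂ - a (2 ^ k) * b m₁ := by ring
        have h9 : a (2 ^ k) * (b m₂ + 1) ≤ a (2 ^ k) * c :=
          mul_le_mul_of_nonneg_left (by omega) hρ0.le
        have h10 : a (2 ^ k) * (b m₂ + 1) = a (2 ^ k) * b m₂ + a (2 ^ k) := by ring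
        refine ⟨by omega, by omega, by linear_combination a (2 ^ k) * hbsum + hjw⟩
      · -- w covered in a, c covered in b
        obtain ⟨m₁, m₂, hm₁q, hm₂q, hblt, hbc, hbsum⟩ := cover_gap hB hqB hcgap hcbq
        have hj₁ : 2 ^ k * m₁ + i < 2 ^ k * q + 0 := by
          have h5 : 2 ^ k * (m₁ + 1) ≤ 2 ^ k * q := Nat.mul_le_mul_left _ (by omega)
          have h6 : 2 ^ k * (m₁ + 1) = 2 ^ k * m₁ + 2 ^ k := by ring
          omega
        have hj₂ : 2 ^ k * m₂ + j < 2 ^ k * q + 0 := by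
          have h5 : 2 ^ k * (m₂ + 1) ≤ 2 ^ k * q := Nat.mul_le_mul_left _ (by omega)
          have h6 : 2 ^ k * (m₂ + 1) = 2 ^ k * m₂ + 2 ^ k := by ring
          omega
        refine ⟨2 ^ k * m₁ + i, 2 ^ k * m₂ + j, hj₁, hj₂, ?_⟩
        have e₁ := prodSeq_eval a b k (q := m₁) hik
        have e₂ := prodSeq_eval a b k (q := m₂) hjk
        rw [e₁, e₂]
        have hiM : a i ≤ a (2 ^ k - 1) := a_le_M hA hik
        have hjM : a j ≤ a (2 ^ k - 1) := a_le_M hA hjk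
        have hi0 : 0 ≤ a i := a_nonneg hA i
        have hj0 : 0 ≤ a j := a_nonneg hA j
        have h7 : a (2 ^ k) * 1 ≤ a (2 ^ k) * (b m₂ - b m₁) :=
          mul_le_mul_of_nonneg_left (by omega) hρ0.le
        have h8 : a (2 ^ k) * (b m₂ - b m₁) = a (2 ^ k) * b m₂ - a (2 ^ k) * b m₁ := by ring
        have h9 : a (2 ^ k) * (b m₂ + 1) ≤ a (2 ^ k) * c :=
          mul_le_mul_of_nonneg_left (by omega) hρ0.le
        have h10 : a (2 ^ k) * (b m₂ + 1) = a (2 ^ k) * b m₂ + a (2 ^ k) := by ring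
        refine ⟨by omega, by omega, by linear_combination a (2 ^ k) * hbsum + hsum⟩
      · -- w in O(A)
        obtain ⟨m₁, m₂, hm₁q, hm₂q, hbsum, hm₂le, hbcase⟩ :=
          b_step hB hqB (c := c) (by omega) (by omega)
        have hj₁ : 2 ^ k * m₁ + i₁ < 2 ^ k * q + 0 := by
          have h5 : 2 ^ k * (m₁ + 1) ≤ 2 ^ k * q := Nat.mul_le_mul_left _ (by omega)
          have h6 : 2 ^ k * (m₁ + 1) = 2 ^ k * m₁ + 2 ^ k := by ring
          omega
        have hj₂ : 2 ^ k * m₂ + i₂ < 2 ^ k * q + 0 := by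
          have h5 : 2 ^ k * (m₂ + 1) ≤ 2 ^ k * q := Nat.mul_le_mul_left _ (by omega)
          have h6 : 2 ^ k * (m₂ + 1) = 2 ^ k * m₂ + 2 ^ k := by ring
          omega
        refine ⟨2 ^ k * m₁ + i₁, 2 ^ k * m₂ + i₂, hj₁, hj₂, ?_⟩
        have e₁ := prodSeq_eval a b k (q := m₁) hi₁
        have e₂ := prodSeq_eval a b k (q := m₂) hi₂
        rw [e₁, e₂]
        have hi₁M : a i₁ ≤ a (2 ^ k - 1) := a_le_M hA hi₁
        have hi₂M : a i₂ ≤ a (2 ^ k - 1) := a_le_M hA hi₂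
        have hi₁0 : 0 ≤ a i₁ := a_nonneg hA i₁
        have hi₂0 : 0 ≤ a i₂ := a_nonneg hA i₂
        have h9 : a (2 ^ k) * (b m₂ + 1) ≤ a (2 ^ k) * c :=
          mul_le_mul_of_nonneg_left (by omega) hρ0.le
        have h10 : a (2 ^ k) * (b m₂ + 1) = a (2 ^ k) * b m₂ + a (2 ^ k) := by ring
        refine ⟨?_, by omega, by linear_combination a (2 ^ k) * hbsum + hsum⟩
        · rcases hbcase with hbe | hbl
          · rw [hbe]; omega
          · have h7 : a (2 ^ k) * 1 ≤ a (2 ^ k) * (b m₂ - b m₁) :=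
              mul_le_mul_of_nonneg_left (by omega) hρ0.le
            have h8 : a (2 ^ k) * (b m₂ - b m₁) = a (2 ^ k) * b m₂ - a (2 ^ k) * b m₁ := by ring
            omega

end StanleyAux
namespace StanleyAux

variable {A B : Finset ℤ} {a b : ℕ → ℤ} {lamA lamB : ℤ} {κA κB k : ℕ}

lemma prodSeq_range_eq (hA : IsStanleySeq A a) :
    Set.range (prodSeq a b k) =
      {v : ℤ | ∃ i < 2 ^ k, ∃ m : ℕ, v = a (2 ^ k) * b m + a i} := by
  have hp := pow_pos' k
  ext v
  constructor
  · rintro ⟨n, rfl⟩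
    exact ⟨n % 2 ^ k, Nat.mod_lt _ (by omega), n / 2 ^ k, rfl⟩
  · rintro ⟨i, hi, m, rfl⟩
    exact ⟨2 ^ k * m + i, prodSeq_eval a b k hi⟩

lemma prodSeq_image (hA : IsStanleySeq A a) (hB : IsStanleySeq B b) :
    (Finset.range (2 ^ k * B.card)).image (prodSeq a b k) =
      (Finset.range (2 ^ k) ×ˢ B).image (fun p => a (2 ^ k) * p.2 + a p.1) := by
  have hp := pow_pos' k
  apply Finset.ext
  intro x
  simp only [Finset.mem_image, Finset.mem_range, Finset.mem_product]
  constructor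
  · rintro ⟨n, hn, rfl⟩
    have hq : n / 2 ^ k < B.card := by
      rw [Nat.div_lt_iff_lt_mul (by omega)]
      have := Nat.mul_comm (2 ^ k) B.card
      omega
    refine ⟨(n % 2 ^ k, b (n / 2 ^ k)), ⟨Nat.mod_lt _ (by omega), hB.2.2.2.2.1 _ hq⟩, rfl⟩
  · rintro ⟨p, ⟨hp1, hp2⟩, rfl⟩
    obtain ⟨m, hm, hbm⟩ := enum_surj hB hp2
    refine ⟨2 ^ k * m + p.1, ?_, ?_⟩
    · have h5 : 2 ^ k * (m + 1) ≤ 2 ^ k * B.card := Nat.mul_le_mul_left _ (by omega)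
      have h6 : 2 ^ k * (m + 1) = 2 ^ k * m + 2 ^ k := by ring
      omega
    · rw [prodSeq_eval a b k hp1, hbm]

lemma prodSeq_isStanley (hA : IsStanleySeq A a) (hB : IsStanleySeq B b)
    (hIA : IndepParams a lamA κA) (hkA : κA ≤ k)
    (AB : Finset ℤ)
    (hAB : AB = (Finset.range (2 ^ k) ×ˢ B).image fun p => a (2 ^ k) * p.2 + a p.1) :
    IsStanleySeq AB (prodSeq a b k) := by
  have hp := pow_pos' k
  have himg := prodSeq_image (b := b) hA hB (k := k)
  rw [← hAB] at himg
  have hcard : AB.card = 2 ^ k * B.card := by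
    rw [← himg, Finset.card_image_of_injective _ (prodSeq_mono hA hB k).injective,
      Finset.card_range]
  have hsub : ↑AB ⊆ {v : ℤ | ∃ β ∈ (↑B : Set ℤ), ∃ i < 2 ^ k, v = a (2 ^ k) * β + a i} := by
    intro x hx
    rw [hAB] at hx
    simp only [Finset.coe_image, Set.mem_image, Finset.mem_coe, Finset.mem_product,
      Finset.mem_range] at hx
    obtain ⟨p, ⟨hp1, hp2⟩, rfl⟩ := hx
    exact ⟨p.2, hp2, p.1, hp1, rfl⟩
  have hrangesub : Set.range (prodSeq a b k) ⊆
      {v : ℤ | ∃ β ∈ Set.range b, ∃ i < 2 ^ k, v = a (2 ^ k) * β + a i} := by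
    rintro x ⟨n, rfl⟩
    exact ⟨b (n / 2 ^ k), ⟨n / 2 ^ k, rfl⟩, n % 2 ^ k, Nat.mod_lt _ (by omega), rfl⟩
  have hrangefree : ThreeFreeSet (Set.range (prodSeq a b k)) :=
    threeFree_mono hrangesub (prod_threeFree hA hIA hkA _ (range_free hB))
  refine ⟨?_, ?_, ?_, prodSeq_mono hA hB k, ?_, ?_⟩
  · -- 0 ∈ AB
    rw [hAB]
    apply Finset.mem_image.2
    refine ⟨(0, 0), Finset.mem_product.2 ⟨Finset.mem_range.2 (by omega), hB.1⟩, ?_⟩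
    simp [a_zero hA]
  · -- nonneg
    intro x hx
    rw [hAB] at hx
    simp only [Finset.mem_image, Finset.mem_product, Finset.mem_range] at hx
    obtain ⟨p, ⟨hp1, hp2⟩, rfl⟩ := hx
    have h1 : 0 ≤ a (2 ^ k) := a_nonneg hA _
    have h2 : 0 ≤ p.2 := hB.2.1 _ hp2
    have h3 : 0 ≤ a p.1 := a_nonneg hA _
    have h4 := mul_nonneg h1 h2
    omega
  · -- three-free
    exact threeFree_mono hsub (prod_threeFree hA hIA hkA _ hB.2.2.1)
  · -- enumeration
    intro i hi
    rw [hcard] at hi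
    rw [← himg]
    exact Finset.mem_image.2 ⟨i, Finset.mem_range.2 hi, rfl⟩
  · -- greedy
    intro n hn
    rw [hcard] at hn
    have hn1 : 1 ≤ n := by
      have h5 : 0 < 2 ^ k * B.card := Nat.mul_pos (by omega) (card_pos hB)
      omega
    constructor
    · refine ⟨prodSeq_mono hA hB k (by omega), ?_⟩
      apply threeFree_mono _ hrangefree
      rintro x (⟨i, _, rfl⟩ | hx)
      · exact ⟨i, rfl⟩
      · rw [hx]; exact ⟨n, rfl⟩
    · rintro m ⟨hm1, hm2⟩
      by_contra h
      push_neg at h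
      obtain ⟨j₁, j₂, hj₁, hj₂, hlt, hltv, hsum⟩ := main_cover hA hB hIA hkA hn hm1 h
      exact hm2 (prodSeq a b k j₁) (Or.inl ⟨j₁, hj₁, rfl⟩)
        (prodSeq a b k j₂) (Or.inl ⟨j₂, hj₂, rfl⟩) m (Or.inr rfl) hlt hltv hsum

lemma prodSeq_indep (hA : IsStanleySeq A a) (hB : IsStanleySeq B b)
    (hIA : IndepParams a lamA κA) (hIB : IndepParams b lamB κB) (hkA : κA ≤ k) :
    IndepParams (prodSeq a b k) (lamA + a (2 ^ k) * lamB) (k + κB) := by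
  have hp := pow_pos' k
  intro k₂ hk₂
  have he : k₂ = k + (k₂ - k) := by omega
  set e : ℕ := k₂ - k with hedef
  have heB : κB ≤ e := by omega
  have hpe := pow_pos' e
  have h2k₂ : 2 ^ k₂ = 2 ^ k * 2 ^ e := by
    rw [he, pow_add]
  constructor
  · intro i hi
    have hm : i / 2 ^ k < 2 ^ e := by
      rw [Nat.div_lt_iff_lt_mul (by omega)]
      have := Nat.mul_comm (2 ^ e) (2 ^ k)
      omega
    have hj : i % 2 ^ k < 2 ^ k := Nat.mod_lt _ (by omega)
    have hsplit : i = 2 ^ k * (i / 2 ^ k) + i % 2 ^ k := (Nat.div_add_mod i (2 ^ k)).symm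
    have e1 : prodSeq a b k i = a (2 ^ k) * b (i / 2 ^ k) + a (i % 2 ^ k) := rfl
    have e2 : prodSeq a b k (2 ^ k₂ + i) =
        a (2 ^ k) * b (2 ^ e + i / 2 ^ k) + a (i % 2 ^ k) := by
      have h5 : 2 ^ k₂ + i = 2 ^ k * (2 ^ e + i / 2 ^ k) + i % 2 ^ k := by
        have h6 : 2 ^ k * (2 ^ e + i / 2 ^ k) = 2 ^ k * 2 ^ e + 2 ^ k * (i / 2 ^ k) := by ring
        omega
      rw [h5]; exact prodSeq_eval a b k hj
    have e3 : prodSeq a b k (2 ^ k₂) = a (2 ^ k) * b (2 ^ e) := by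
      have h5 : 2 ^ k₂ = 2 ^ k * 2 ^ e + 0 := by omega
      rw [h5, prodSeq_eval a b k (by omega), a_zero hA, add_zero]
    have hbshift : b (2 ^ e + i / 2 ^ k) = b (2 ^ e) + b (i / 2 ^ k) := shift_eq hIB heB hm
    rw [e1, e2, e3, hbshift]
    ring
  · have e3 : prodSeq a b k (2 ^ k₂) = a (2 ^ k) * b (2 ^ e) := by
      have h5 : 2 ^ k₂ = 2 ^ k * 2 ^ e + 0 := by omega
      rw [h5, prodSeq_eval a b k (by omega), a_zero hA, add_zero]
    have e4 : prodSeq a b k (2 ^ k₂ - 1) = a (2 ^ k) * b (2 ^ e - 1) + a (2 ^ k - 1) := by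
      have h5 : 2 ^ k₂ - 1 = 2 ^ k * (2 ^ e - 1) + (2 ^ k - 1) := by
        have h6 : 2 ^ k * (2 ^ e - 1) + 2 ^ k = 2 ^ k * 2 ^ e := by
          have h7 : 2 ^ e - 1 + 1 = 2 ^ e := by omega
          calc 2 ^ k * (2 ^ e - 1) + 2 ^ k = 2 ^ k * (2 ^ e - 1 + 1) := by ring
            _ = 2 ^ k * 2 ^ e := by rw [h7]
        omega
      rw [h5]; exact prodSeq_eval a b k (by omega)
    have hbrec : b (2 ^ e) = 2 * b (2 ^ e - 1) + 1 - lamB := rec_eq hIB heB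
    have harec : a (2 ^ k) = 2 * a (2 ^ k - 1) + 1 - lamA := rec_eq hIA hkA
    rw [e3, e4, hbrec]
    linear_combination harec

lemma stanley_unique {S : Finset ℤ} {s s' : ℕ → ℤ}
    (hs : IsStanleySeq S s) (hs' : IsStanleySeq S s') : ∀ n, s n = s' n := by
  intro n
  induction n using Nat.strong_induction_on with
  | _ n ih =>
    by_cases h : n < S.card
    · have e1 := Finset.orderEmbOfFin_unique (s := S) (k := S.card) rfl
        (f := fun i : Fin S.card => s i) (fun i => hs.2.2.2.2.1 i i.2)
        (fun i j hij => hs.2.2.2.1 hij)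
      have e2 := Finset.orderEmbOfFin_unique (s := S) (k := S.card) rfl
        (f := fun i : Fin S.card => s' i) (fun i => hs'.2.2.2.2.1 i i.2)
        (fun i j hij => hs'.2.2.2.1 hij)
      have := congrFun e1 ⟨n, h⟩
      have := congrFun e2 ⟨n, h⟩
      simp only at *
      omega
    · push_neg at h
      have hg := hs.2.2.2.2.2 n h
      have hg' := hs'.2.2.2.2.2 n h
      have himg : s '' Set.Iio n = s' '' Set.Iio n := by
        ext x
        constructor
        · rintro ⟨i, hi, rfl⟩
          exact ⟨i, hi, (ih i hi).symm⟩
        · rintro ⟨i, hi, rfl⟩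
          exact ⟨i, hi, ih i hi⟩
      have hn1 : s (n - 1) = s' (n - 1) := by
        have := card_pos hs
        exact ih (n - 1) (by omega)
      rw [himg, hn1] at hg
      exact hg.unique hg'

end StanleyAux

/-- Proposition 3.4: if S(A) and S(B) are independent and k ≥ κ(A),
then with A* = {a_0,...,a_{2^k−1}} and A ⊗_k B = {a_{2^k}·b + a : a ∈ A*, b ∈ B},
the sequence S(A ⊗_k B) is independent and its set of terms is
{a_{2^k}·b + a : a ∈ A*, b ∈ S(B)}. -/
theorem product_construction (A B : Finset ℤ) (a b : ℕ → ℤ)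
    (hA : IsStanleySeq A a) (hB : IsStanleySeq B b)
    (hIndA : Independent a) (hIndB : Independent b)
    (k : ℕ) (hk : kappa a ≤ k)
    (AB : Finset ℤ)
    (hAB : AB = (Finset.range (2 ^ k) ×ˢ B).image fun p => a (2 ^ k) * p.2 + a p.1) :
    (∃ ab : ℕ → ℤ, IsStanleySeq AB ab) ∧
    ∀ ab : ℕ → ℤ, IsStanleySeq AB ab →
      Independent ab ∧
      Set.range ab = {v : ℤ | ∃ i < 2 ^ k, ∃ m : ℕ, v = a (2 ^ k) * b m + a i} := by
  obtain ⟨lamA, hIA⟩ : ∃ lam, IndepParams a lam (kappa a) := by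
    have hne : {κ | ∃ lam, IndepParams a lam κ}.Nonempty := by
      obtain ⟨lam, κ, h⟩ := hIndA
      exact ⟨κ, lam, h⟩
    exact Nat.sInf_mem hne
  obtain ⟨lamB, κB, hIB⟩ := hIndB
  have hStan : IsStanleySeq AB (StanleyAux.prodSeq a b k) :=
    StanleyAux.prodSeq_isStanley hA hB hIA hk AB hAB
  refine ⟨⟨_, hStan⟩, ?_⟩
  intro ab hab
  have heq : ab = StanleyAux.prodSeq a b k :=
    funext (StanleyAux.stanley_unique hab hStan)
  subst heq
  exact ⟨⟨lamA + a (2 ^ k) * lamB, k + κB,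
    StanleyAux.prodSeq_indep hA hB hIA hIB hk⟩, StanleyAux.prodSeq_range_eq hA⟩
end

section
/- Let S(A) = {a_n} be an independent Stanley sequence. Then for every k ≥ κ(A), a_{2^{k+1}} = 3·a_{2^k}; consequently a_{2^k} = 3^{k − κ(A)}·a_{2^{κ(A)}} for all k ≥ κ(A), i.e., there is a positive constant α with a_{2^k} = α·3^k for all k ≥ κ(A). -/
/-- for an independent Stanley sequence, a_{2^{k+1}} = 3a_{2^k} for
all k ≥ κ(A); hence a_{2^k} = 3^{k−κ(A)}·a_{2^{κ(A)}}, i.e. there is a positive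
constant α with a_{2^k} = α·3^k for all k ≥ κ(A). -/
theorem geometric_growth_of_independent (A : Finset ℤ) (a : ℕ → ℤ)
    (hA : IsStanleySeq A a) (hInd : Independent a) :
    (∀ k : ℕ, kappa a ≤ k → a (2 ^ (k + 1)) = 3 * a (2 ^ k)) ∧
    (∀ k : ℕ, kappa a ≤ k → a (2 ^ k) = 3 ^ (k - kappa a) * a (2 ^ kappa a)) ∧
    ∃ α : ℚ, 0 < α ∧ ∀ k : ℕ, kappa a ≤ k → (a (2 ^ k) : ℚ) = α * 3 ^ k := by
  obtain ⟨lam0, k0, h0⟩ := hInd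
  have hmem : kappa a ∈ {κ | ∃ lam, IndepParams a lam κ} :=
    Nat.sInf_mem ⟨k0, lam0, h0⟩
  obtain ⟨lam, hlam⟩ := hmem
  have key : ∀ k : ℕ, kappa a ≤ k → a (2 ^ (k + 1)) = 3 * a (2 ^ k) := by
    intro k hk
    obtain ⟨h1, h2⟩ := hlam k hk
    obtain ⟨_, h2'⟩ := hlam (k + 1) (le_trans hk (Nat.le_succ k))
    have hpos : 0 < 2 ^ k := Nat.two_pow_pos k
    have hi : 2 ^ k - 1 < 2 ^ k := Nat.sub_lt hpos one_pos
    have e1 : a (2 ^ k + (2 ^ k - 1)) = a (2 ^ k) + a (2 ^ k - 1) := h1 _ hi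
    have e2 : 2 ^ (k + 1) - 1 = 2 ^ k + (2 ^ k - 1) := by
      have : 2 ^ (k + 1) = 2 * 2 ^ k := by ring
      omega
    rw [h2', e2, e1]
    linarith [h2]
  have part2 : ∀ k : ℕ, kappa a ≤ k → a (2 ^ k) = 3 ^ (k - kappa a) * a (2 ^ kappa a) := by
    intro k hk
    induction k, hk using Nat.le_induction with
    | base => simp
    | succ n hn ih =>
      rw [key n hn, ih]
      have : n + 1 - kappa a = (n - kappa a) + 1 := by omega
      rw [this, pow_succ]
      ring
  refine ⟨key, part2, (a (2 ^ kappa a) : ℚ) / 3 ^ kappa a, ?_, ?_⟩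
  · have hcard : 0 < A.card := Finset.card_pos.mpr ⟨0, hA.1⟩
    have h0A : a 0 ∈ A := hA.2.2.2.2.1 0 hcard
    have h0le : (0 : ℤ) ≤ a 0 := hA.2.1 _ h0A
    have : a 0 < a (2 ^ kappa a) := hA.2.2.2.1 (Nat.two_pow_pos _)
    have hpos : (0 : ℤ) < a (2 ^ kappa a) := lt_of_le_of_lt h0le this
    positivity
  · intro k hk
    have := part2 k hk
    have h3 : (3 : ℚ) ^ k = 3 ^ (k - kappa a) * 3 ^ kappa a := by
      rw [← pow_add]
      congr 1
      omega
    rw [this]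
    push_cast
    rw [h3]
    field_simp
end

section
/- Let S(0) = {s_n} be the Stanley sequence generated by the set {0}. Then for every n ≥ 0, s_n equals the number obtained by writing n in binary and interpreting the resulting digit string in ternary; that is, if n = Σ_i ε_i·2^i with each ε_i ∈ {0,1}, then s_n = Σ_i ε_i·3^i. In particular, s_{2^k} = 3^k for every k ≥ 0. -/
namespace StanleyAux

def tt (n : ℕ) : ℕ := Nat.ofDigits 3 (Nat.digits 2 n)

lemma tt_zero : tt 0 = 0 := by simp [tt]

lemma tt_rec (n : ℕ) (hn : 0 < n) : tt n = n % 2 + 3 * tt (n / 2) := by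
  unfold tt
  rw [Nat.digits_def' (by norm_num : (1:ℕ) < 2) hn, Nat.ofDigits_cons]

lemma tt_pos : ∀ n, 0 < n → 0 < tt n := by
  intro n
  induction n using Nat.strong_induction_on with
  | _ n ih =>
    intro hn
    rw [tt_rec n hn]
    rcases Nat.lt_or_ge n 2 with h | h
    · interval_cases n
      · simp [tt_zero]
    · have h2 : 0 < n / 2 := Nat.div_pos h (by norm_num)
      have := ih (n / 2) (Nat.div_lt_self hn (by norm_num)) h2
      omega

lemma tt_strictMono : StrictMono tt := by
  have key : ∀ b a, a < b → tt a < tt b := by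
    intro b
    induction b using Nat.strong_induction_on with
    | _ b ih =>
      intro a hab
      rcases Nat.eq_zero_or_pos a with ha | ha
      · subst ha; rw [tt_zero]; exact tt_pos b (by omega)
      rw [tt_rec a ha, tt_rec b (by omega)]
      have hdiv : a / 2 ≤ b / 2 := Nat.div_le_div_right (le_of_lt hab)
      rcases lt_or_eq_of_le hdiv with h | h
      · have := ih (b / 2) (Nat.div_lt_self (by omega) (by norm_num)) (a / 2) h
        omega
      · rw [h]
        omega
  intro a b h; exact key b a h

lemma tt_two_mul (n : ℕ) : tt (2 * n) = 3 * tt n := by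
  rcases Nat.eq_zero_or_pos n with h | h
  · subst h; simp [tt_zero]
  · rw [tt_rec (2 * n) (by omega)]; simp [Nat.mul_div_cancel_left, Nat.mul_mod_right]

def Good (m : ℕ) : Prop := ∀ d ∈ Nat.digits 3 m, d ≤ 1

lemma good_zero : Good 0 := by intro d hd; simp at hd

lemma good_iff (m : ℕ) (hm : 0 < m) : Good m ↔ m % 3 ≤ 1 ∧ Good (m / 3) := by
  unfold Good
  rw [Nat.digits_def' (by norm_num : (1:ℕ) < 3) hm]
  simp

lemma good_mod (m : ℕ) (h : Good m) : m % 3 ≤ 1 := by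
  rcases Nat.eq_zero_or_pos m with h0 | h0
  · omega
  · exact ((good_iff m h0).1 h).1

lemma good_div (m : ℕ) (h : Good m) : Good (m / 3) := by
  rcases Nat.eq_zero_or_pos m with h0 | h0
  · subst h0; simpa using good_zero
  · exact ((good_iff m h0).1 h).2

lemma good_tt : ∀ n, Good (tt n) := by
  intro n
  induction n using Nat.strong_induction_on with
  | _ n ih =>
    rcases Nat.eq_zero_or_pos n with h | h
    · subst h; rw [tt_zero]; exact good_zero
    rw [tt_rec n h]
    have h2 : n % 2 ≤ 1 := by omega
    have hpos : 0 < n % 2 + 3 * tt (n / 2) ∨ n % 2 + 3 * tt (n / 2) = 0 := by omega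
    rcases hpos with hp | hp
    · rw [good_iff _ hp]
      constructor
      · omega
      · have : (n % 2 + 3 * tt (n / 2)) / 3 = tt (n / 2) := by omega
        rw [this]
        exact ih (n / 2) (Nat.div_lt_self h (by norm_num))
    · rw [hp]; exact good_zero

lemma good_surj : ∀ m, Good m → ∃ n, tt n = m := by
  intro m
  induction m using Nat.strong_induction_on with
  | _ m ih =>
    intro hm
    rcases Nat.eq_zero_or_pos m with h0 | h0
    · exact ⟨0, by rw [tt_zero, h0]⟩
    obtain ⟨n, hn⟩ := ih (m / 3) (Nat.div_lt_self h0 (by norm_num)) (good_div m hm)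
    have hmod := good_mod m hm
    refine ⟨2 * n + m % 3, ?_⟩
    have hpos : 0 < 2 * n + m % 3 := by
      rcases Nat.eq_zero_or_pos n with h | h
      · subst h
        rw [tt_zero] at hn
        omega
      · omega
    rw [tt_rec _ hpos]
    have h1 : (2 * n + m % 3) % 2 = m % 3 := by omega
    have h2 : (2 * n + m % 3) / 2 = n := by omega
    rw [h1, h2, hn]
    omega

lemma good_eq_of_add : ∀ y x z, Good x → Good y → Good z → x + z = 2 * y → x = z := by
  intro y
  induction y using Nat.strong_induction_on with
  | _ y ih =>
    intro x z hx hy hz heq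
    rcases Nat.eq_zero_or_pos y with h0 | h0
    · omega
    have hxm := good_mod x hx
    have hym := good_mod y hy
    have hzm := good_mod z hz
    have hdig : x % 3 + z % 3 = 2 * (y % 3) := by omega
    have hdiv : x / 3 + z / 3 = 2 * (y / 3) := by omega
    have := ih (y / 3) (Nat.div_lt_self h0 (by norm_num)) (x / 3) (z / 3)
      (good_div x hx) (good_div y hy) (good_div z hz) hdiv
    omega

def ff : ℕ → ℕ
  | 0 => 0
  | (m+1) => 3 * ff ((m+1)/3) + (if (m+1) % 3 = 2 then 0 else (m+1) % 3)
decreasing_by exact Nat.div_lt_self (Nat.succ_pos m) (by norm_num)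

def gg : ℕ → ℕ
  | 0 => 0
  | (m+1) => 3 * gg ((m+1)/3) + (if (m+1) % 3 = 2 then 1 else (m+1) % 3)
decreasing_by exact Nat.div_lt_self (Nat.succ_pos m) (by norm_num)

lemma ff_zero : ff 0 = 0 := by simp [ff]

lemma ff_rec (m : ℕ) (hm : 0 < m) :
    ff m = 3 * ff (m/3) + (if m % 3 = 2 then 0 else m % 3) := by
  obtain ⟨k, rfl⟩ := Nat.exists_eq_succ_of_ne_zero (Nat.pos_iff_ne_zero.mp hm)
  simp [ff]

lemma gg_zero : gg 0 = 0 := by simp [gg]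

lemma gg_rec (m : ℕ) (hm : 0 < m) :
    gg m = 3 * gg (m/3) + (if m % 3 = 2 then 1 else m % 3) := by
  obtain ⟨k, rfl⟩ := Nat.exists_eq_succ_of_ne_zero (Nat.pos_iff_ne_zero.mp hm)
  simp [gg]

lemma good_ff : ∀ m, Good (ff m) := by
  intro m
  induction m using Nat.strong_induction_on with
  | _ m ih =>
    rcases Nat.eq_zero_or_pos m with h0 | h0
    · subst h0; rw [ff_zero]; exact good_zero
    rw [ff_rec m h0]
    set d := if m % 3 = 2 then 0 else m % 3 with hd
    have hd1 : d ≤ 1 := by simp only [hd]; split <;> omega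
    rcases Nat.eq_zero_or_pos (3 * ff (m/3) + d) with hp | hp
    · rw [hp]; exact good_zero
    rw [good_iff _ hp]
    constructor
    · omega
    · have : (3 * ff (m/3) + d) / 3 = ff (m/3) := by omega
      rw [this]; exact ih (m/3) (Nat.div_lt_self h0 (by norm_num))

lemma good_gg : ∀ m, Good (gg m) := by
  intro m
  induction m using Nat.strong_induction_on with
  | _ m ih =>
    rcases Nat.eq_zero_or_pos m with h0 | h0
    · subst h0; rw [gg_zero]; exact good_zero
    rw [gg_rec m h0]
    set d := if m % 3 = 2 then 1 else m % 3 with hd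
    have hd1 : d ≤ 1 := by simp only [hd]; split <;> omega
    rcases Nat.eq_zero_or_pos (3 * gg (m/3) + d) with hp | hp
    · rw [hp]; exact good_zero
    rw [good_iff _ hp]
    constructor
    · omega
    · have : (3 * gg (m/3) + d) / 3 = gg (m/3) := by omega
      rw [this]; exact ih (m/3) (Nat.div_lt_self h0 (by norm_num))

lemma ff_add (m : ℕ) : ff m + m = 2 * gg m := by
  induction m using Nat.strong_induction_on with
  | _ m ih =>
    rcases Nat.eq_zero_or_pos m with h0 | h0
    · subst h0; rw [ff_zero, gg_zero]
    rw [ff_rec m h0, gg_rec m h0]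
    have := ih (m/3) (Nat.div_lt_self h0 (by norm_num))
    have hm : m = 3 * (m/3) + m % 3 := by omega
    split <;> omega

lemma gg_le (m : ℕ) : gg m ≤ m := by
  induction m using Nat.strong_induction_on with
  | _ m ih =>
    rcases Nat.eq_zero_or_pos m with h0 | h0
    · subst h0; rw [gg_zero]
    rw [gg_rec m h0]
    have := ih (m/3) (Nat.div_lt_self h0 (by norm_num))
    split <;> omega

lemma ff_le_gg (m : ℕ) : ff m ≤ gg m := by
  induction m using Nat.strong_induction_on with
  | _ m ih =>
    rcases Nat.eq_zero_or_pos m with h0 | h0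
    · subst h0; rw [ff_zero, gg_zero]
    rw [ff_rec m h0, gg_rec m h0]
    have := ih (m/3) (Nat.div_lt_self h0 (by norm_num))
    split <;> omega

lemma not_good_lt (m : ℕ) (h : ¬ Good m) : ff m < gg m ∧ gg m < m := by
  induction m using Nat.strong_induction_on with
  | _ m ih =>
    rcases Nat.eq_zero_or_pos m with h0 | h0
    · exact absurd (h0 ▸ good_zero) h
    rw [good_iff m h0] at h
    push_neg at h
    rw [ff_rec m h0, gg_rec m h0]
    have hle := gg_le (m/3)
    have hfg := ff_le_gg (m/3)
    by_cases h2 : m % 3 = 2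
    · simp only [h2, if_pos]
      constructor
      · omega
      · omega
    · have hd : m % 3 ≤ 1 := by omega
      have hng : ¬ Good (m/3) := h hd
      have := ih (m/3) (Nat.div_lt_self h0 (by norm_num)) hng
      simp only [if_neg h2]
      omega

end StanleyAux

namespace StanleyAux

lemma threeFree_good (S : Set ℤ) (h : ∀ x ∈ S, ∃ m : ℕ, Good m ∧ x = (m:ℤ)) :
    ThreeFreeSet S := by
  intro x hx y hy z hz hxy hyz heq
  obtain ⟨a, ha, rfl⟩ := h x hx
  obtain ⟨b, hb, rfl⟩ := h y hy
  obtain ⟨c, hc, rfl⟩ := h z hz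
  have h1 : a + c = 2 * b := by exact_mod_cast heq
  have h2 := good_eq_of_add b a c ha hb hc h1
  have h3 : a < c := by exact_mod_cast hxy.trans hyz
  omega

lemma tt_pow (k : ℕ) : tt (2 ^ k) = 3 ^ k := by
  induction k with
  | zero =>
    show tt 1 = 1
    rw [tt_rec 1 (by norm_num), tt_zero]
  | succ k ihk =>
    rw [pow_succ, mul_comm, tt_two_mul, ihk, pow_succ, mul_comm]

end StanleyAux


open StanleyAux in
/-- the n-th term of S(0) is obtained by writing n in binary and
reading it in ternary; in particular s_{2^k} = 3^k. -/
theorem stanley_zero_binary_to_ternary (s : ℕ → ℤ) (hs : IsStanleySeq {0} s) :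
    (∀ n : ℕ, s n = (Nat.ofDigits 3 (Nat.digits 2 n) : ℤ)) ∧
    ∀ k : ℕ, s (2 ^ k) = 3 ^ k := by
  unfold IsStanleySeq at hs
  obtain ⟨-, -, -, -, hinit, hleast⟩ := hs
  have hs0 : s 0 = 0 := by
    have := hinit 0 (by simp)
    simpa using this
  have key : ∀ n, s n = (tt n : ℤ) := by
    intro n
    induction n using Nat.strong_induction_on with
    | _ n ih =>
      rcases Nat.eq_zero_or_pos n with h0n | h0n
      · subst h0n; rw [hs0, tt_zero]; simp
      obtain ⟨k, rfl⟩ := Nat.exists_eq_succ_of_ne_zero (Nat.pos_iff_ne_zero.mp h0n)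
      have hL := hleast (k + 1) (by simp)
      simp only [Nat.add_sub_cancel] at hL
      have himg : s '' Set.Iio (k+1) = (fun j => ((tt j : ℤ))) '' Set.Iio (k+1) := by
        ext x
        simp only [Set.mem_image, Set.mem_Iio]
        constructor
        · rintro ⟨j, hj, rfl⟩; exact ⟨j, hj, (ih j hj).symm⟩
        · rintro ⟨j, hj, rfl⟩; exact ⟨j, hj, ih j hj⟩
      have hmem : (tt (k+1) : ℤ) ∈
          {m : ℤ | s k < m ∧ ThreeFreeSet (s '' Set.Iio (k+1) ∪ {m})} := by
        constructor
        · rw [ih k (by omega)]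
          exact_mod_cast tt_strictMono (Nat.lt_succ_self k)
        · apply threeFree_good
          intro x hx
          rcases hx with hx | hx
          · rw [himg] at hx
            obtain ⟨j, -, rfl⟩ := hx
            exact ⟨tt j, good_tt j, rfl⟩
          · rw [Set.mem_singleton_iff] at hx
            exact ⟨tt (k+1), good_tt _, hx⟩
      have hub : s (k+1) ≤ (tt (k+1) : ℤ) := hL.2 hmem
      have hlb : (tt (k+1) : ℤ) ≤ s (k+1) := by
        by_contra hcon
        push_neg at hcon
        obtain ⟨hgt, hfree'⟩ := hL.1
        have hsk : s k = (tt k : ℤ) := ih k (by omega)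
        have hpos' : 0 ≤ s (k+1) := by
          have : (0:ℤ) ≤ (tt k : ℤ) := Int.natCast_nonneg _
          rw [hsk] at hgt; omega
        set M := (s (k+1)).toNat with hMdef
        have hMeq : (M : ℤ) = s (k+1) := Int.toNat_of_nonneg hpos'
        have hMlt : M < tt (k+1) := by
          rw [← hMeq] at hcon; exact_mod_cast hcon
        by_cases hg : Good M
        · obtain ⟨j, hj⟩ := good_surj M hg
          have h1 : tt k < tt j := by
            rw [hsk, ← hMeq] at hgt
            rw [hj]; exact_mod_cast hgt
          have h2 : tt j < tt (k+1) := hj ▸ hMlt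
          have hk1 := tt_strictMono.lt_iff_lt.mp h1
          have hk2 := tt_strictMono.lt_iff_lt.mp h2
          omega
        · obtain ⟨hfg, hgM⟩ := not_good_lt M hg
          obtain ⟨i, hi⟩ := good_surj _ (good_ff M)
          obtain ⟨i', hi'⟩ := good_surj _ (good_gg M)
          have hik : i < k + 1 := by
            apply tt_strictMono.lt_iff_lt.mp
            rw [hi]; omega
          have hik' : i' < k + 1 := by
            apply tt_strictMono.lt_iff_lt.mp
            rw [hi']; omega
          have hx : (tt i : ℤ) ∈ s '' Set.Iio (k+1) ∪ {s (k+1)} := by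
            left; rw [himg]; exact ⟨i, hik, rfl⟩
          have hy : (tt i' : ℤ) ∈ s '' Set.Iio (k+1) ∪ {s (k+1)} := by
            left; rw [himg]; exact ⟨i', hik', rfl⟩
          have hz : s (k+1) ∈ s '' Set.Iio (k+1) ∪ {s (k+1)} := by
            right; rfl
          refine hfree' _ hx _ hy _ hz ?_ ?_ ?_
          · exact_mod_cast hi ▸ hi' ▸ (by exact_mod_cast hfg : (ff M : ℤ) < (gg M : ℤ))
          · rw [← hMeq, hi']; exact_mod_cast hgM
          · have := ff_add M
            rw [← hMeq, hi, hi']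
            exact_mod_cast this
      exact le_antisymm hub hlb
  constructor
  · intro n
    rw [key n]
    exact_mod_cast Nat.coe_ofDigits ℤ 3 (Nat.digits 2 n)
  · intro k
    rw [key (2 ^ k)]
    rw [tt_pow]
    push_cast
    ring
end
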